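/- arXiv:1504.01357 — 7 statements merged into one kernel-verified Lean document; each statement's English description precedes it below -/
import Mathlib

section
/- For every 0 < α < 1 and every n ∈ ℕ₀ one has the strict inequality k^{α+1}(2n) < 2^α · (1 + (1-α)/(2(1+α)))^α · k^{α+1}(n). -/
/-- The Cesàro kernel `k^α(n) = Γ(n+α)/(Γ(α)·Γ(n+1))`. -/
noncomputable def cesK (α : ℝ) (n : ℕ) : ℝ :=
  Real.Gamma ((n : ℝ) + α) / (Real.Gamma α * Real.Gamma ((n : ℝ) + 1))

lemma gamma_interp (a b t : ℝ) (ha : 0 < a) (hb : 0 < b) (ht0 : 0 ≤ t) (ht1 : t ≤ 1) :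
    Real.Gamma ((1 - t) * a + t * b) ≤ Real.Gamma a ^ (1 - t) * Real.Gamma b ^ t := by
  have hc : 0 < (1 - t) * a + t * b := by
    rcases eq_or_lt_of_le ht1 with h | h
    · simp [← h]; positivity
    · have : 0 < 1 - t := by linarith
      positivity
  have hkey := Real.convexOn_log_Gamma.2 (Set.mem_Ioi.mpr ha) (Set.mem_Ioi.mpr hb)
    (by linarith : (0:ℝ) ≤ 1 - t) ht0 (by ring)
  simp only [Function.comp, smul_eq_mul] at hkey
  have hGa := Real.Gamma_pos_of_pos ha
  have hGb := Real.Gamma_pos_of_pos hb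
  have hGc := Real.Gamma_pos_of_pos hc
  calc Real.Gamma ((1 - t) * a + t * b)
      = Real.exp (Real.log (Real.Gamma ((1 - t) * a + t * b))) := (Real.exp_log hGc).symm
    _ ≤ Real.exp ((1 - t) * Real.log (Real.Gamma a) + t * Real.log (Real.Gamma b)) :=
        Real.exp_le_exp.mpr hkey
    _ = Real.Gamma a ^ (1 - t) * Real.Gamma b ^ t := by
        rw [Real.exp_add, Real.rpow_def_of_pos hGa, Real.rpow_def_of_pos hGb]
        ring_nf

lemma gamma_upper (x α : ℝ) (hx : 0 < x) (h0 : 0 < α) (h1 : α < 1) :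
    Real.Gamma (x + α) ≤ Real.Gamma x * x ^ α := by
  have h := gamma_interp x (x + 1) α hx (by linarith) h0.le h1.le
  have he : (1 - α) * x + α * (x + 1) = x + α := by ring
  rw [he] at h
  have hG1 : Real.Gamma (x + 1) = x * Real.Gamma x := Real.Gamma_add_one hx.ne'
  have hGx := Real.Gamma_pos_of_pos hx
  calc Real.Gamma (x + α) ≤ Real.Gamma x ^ (1 - α) * Real.Gamma (x + 1) ^ α := h
    _ = Real.Gamma x ^ (1 - α) * (Real.Gamma x ^ α * x ^ α) := by
        rw [hG1, Real.mul_rpow hx.le hGx.le]; ring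
    _ = Real.Gamma x * x ^ α := by
        rw [← mul_assoc, ← Real.rpow_add hGx]; norm_num

lemma gamma_lower (x α : ℝ) (hx : 1 ≤ x) (h0 : 0 < α) (h1 : α < 1) :
    Real.Gamma x * (x + α - 1) ^ α ≤ Real.Gamma (x + α) := by
  have hp : 0 < x + α - 1 := by linarith
  have h := gamma_interp (x + α) (x + α - 1) α (by linarith) hp h0.le h1.le
  have he : (1 - α) * (x + α) + α * (x + α - 1) = x := by ring
  rw [he] at h
  have hG1 : Real.Gamma (x + α) = (x + α - 1) * Real.Gamma (x + α - 1) := by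
    have := Real.Gamma_add_one hp.ne'
    rw [show x + α - 1 + 1 = x + α by ring] at this
    exact this
  have hGp := Real.Gamma_pos_of_pos (show (0:ℝ) < x + α by linarith)
  have hGq := Real.Gamma_pos_of_pos hp
  have h2 : Real.Gamma x ≤ Real.Gamma (x + α) / (x + α - 1) ^ α := by
    calc Real.Gamma x ≤ Real.Gamma (x + α) ^ (1 - α) * Real.Gamma (x + α - 1) ^ α := h
      _ = Real.Gamma (x + α) ^ (1 - α) * (Real.Gamma (x + α) / (x + α - 1)) ^ α := by
          congr 2
          rw [eq_div_iff hp.ne', mul_comm, ← hG1]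
      _ = Real.Gamma (x + α) / (x + α - 1) ^ α := by
          rw [Real.div_rpow hGp.le hp.le, ← mul_div_assoc,
            ← Real.rpow_add hGp]
          norm_num
  rw [div_eq_mul_inv] at h2
  have hpow : 0 < (x + α - 1) ^ α := Real.rpow_pos_of_pos hp α
  calc Real.Gamma x * (x + α - 1) ^ α
      ≤ Real.Gamma (x + α) * ((x + α - 1) ^ α)⁻¹ * (x + α - 1) ^ α :=
        mul_le_mul_of_nonneg_right h2 hpow.le
    _ = Real.Gamma (x + α) := by field_simp

theorem stmt1 (α : ℝ) (h0 : 0 < α) (h1 : α < 1) (n : ℕ) :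
    cesK (α + 1) (2 * n) <
      (2 : ℝ) ^ α * (1 + (1 - α) / (2 * (1 + α))) ^ α * cesK (α + 1) n := by
  have hb2 : (0:ℝ) ≤ 1 + (1 - α) / (2 * (1 + α)) := by
    have h2 : (0:ℝ) < 1 - α := by linarith
    have h3 : (0:ℝ) < 2 * (1 + α) := by linarith
    positivity
  have hC : (2 : ℝ) ^ α * (1 + (1 - α) / (2 * (1 + α))) ^ α = ((3 + α) / (1 + α)) ^ α := by
    rw [← Real.mul_rpow (by norm_num) hb2]
    congr 1
    field_simp
    ring
  rw [hC]
  have hGα : 0 < Real.Gamma (α + 1) := Real.Gamma_pos_of_pos (by linarith)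
  have hbase : (1:ℝ) < (3 + α) / (1 + α) := by
    rw [lt_div_iff₀ (by linarith)]; linarith
  have hCpos : (0:ℝ) < ((3 + α) / (1 + α)) ^ α := Real.rpow_pos_of_pos (by positivity) α
  rcases Nat.eq_zero_or_pos n with rfl | hn
  · simp only [Nat.mul_zero, cesK, Nat.cast_zero, zero_add]
    rw [Real.Gamma_one]
    have : Real.Gamma (α + 1) / (Real.Gamma (α + 1) * 1) = 1 := by field_simp
    rw [this]
    calc (1:ℝ) < ((3 + α) / (1 + α)) ^ α := Real.one_lt_rpow_iff_of_pos (by positivity) |>.mpr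
          (Or.inl ⟨hbase, h0⟩)
      _ = ((3 + α) / (1 + α)) ^ α * 1 := (mul_one _).symm
  · -- n ≥ 1
    have hn1 : (1:ℝ) ≤ (n:ℝ) := by exact_mod_cast hn
    have hGn : 0 < Real.Gamma ((n:ℝ) + 1) := Real.Gamma_pos_of_pos (by positivity)
    -- upper bound for cesK (α+1) (2n)
    have hup : cesK (α + 1) (2 * n) ≤ ((2*n:ℝ) + 1) ^ α / Real.Gamma (α + 1) := by
      have h := gamma_upper ((2*n:ℝ) + 1) α (by positivity) h0 h1
      have hcast : ((2*n : ℕ) : ℝ) = 2*(n:ℝ) := by push_cast; ring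
      unfold cesK
      rw [hcast]
      rw [show 2*(n:ℝ) + (α + 1) = (2*(n:ℝ) + 1) + α by ring]
      rw [div_le_div_iff₀ (by positivity) hGα]
      have hG2n' : 0 < Real.Gamma (2*(n:ℝ) + 1) := Real.Gamma_pos_of_pos (by positivity)
      calc Real.Gamma (2*(n:ℝ) + 1 + α) * Real.Gamma (α + 1)
          ≤ Real.Gamma (2*(n:ℝ) + 1) * (2*(n:ℝ) + 1) ^ α * Real.Gamma (α + 1) := by
            apply mul_le_mul_of_nonneg_right h hGα.le
        _ = (2*(n:ℝ) + 1) ^ α * (Real.Gamma (α+1) * Real.Gamma (2*(n:ℝ) + 1)) := by ring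
    -- lower bound for cesK (α+1) n
    have hlo : ((n:ℝ) + α) ^ α / Real.Gamma (α + 1) ≤ cesK (α + 1) n := by
      have h := gamma_lower ((n:ℝ) + 1) α (by linarith) h0 h1
      rw [show (n:ℝ) + 1 + α - 1 = (n:ℝ) + α by ring] at h
      unfold cesK
      rw [show (n:ℝ) + (α + 1) = ((n:ℝ) + 1) + α by ring]
      rw [div_le_div_iff₀ hGα (by positivity)]
      calc ((n:ℝ) + α) ^ α * (Real.Gamma (α + 1) * Real.Gamma ((n:ℝ) + 1))
          = Real.Gamma ((n:ℝ) + 1) * ((n:ℝ) + α) ^ α * Real.Gamma (α + 1) := by ring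
        _ ≤ Real.Gamma ((n:ℝ) + 1 + α) * Real.Gamma (α + 1) :=
            mul_le_mul_of_nonneg_right h hGα.le
    -- strict middle inequality
    have hmid : ((2*n:ℝ) + 1) ^ α / Real.Gamma (α + 1)
        < ((3 + α) / (1 + α)) ^ α * (((n:ℝ) + α) ^ α / Real.Gamma (α + 1)) := by
      rw [div_lt_iff₀ hGα, mul_assoc, div_mul_cancel₀ _ hGα.ne']
      rw [← Real.mul_rpow (by positivity) (by positivity)]
      apply Real.rpow_lt_rpow (by positivity) _ h0
      rw [div_mul_eq_mul_div, lt_div_iff₀ (by linarith)]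
      nlinarith
    calc cesK (α + 1) (2 * n) ≤ ((2*n:ℝ) + 1) ^ α / Real.Gamma (α + 1) := hup
      _ < ((3 + α) / (1 + α)) ^ α * (((n:ℝ) + α) ^ α / Real.Gamma (α + 1)) := hmid
      _ ≤ ((3 + α) / (1 + α)) ^ α * cesK (α + 1) n := by
          exact mul_le_mul_of_nonneg_left hlo hCpos.le
end

section
/- Let X be a complex Banach space and let f : ℕ₀ → X be a finitely supported sequence. Then for all α, β > 0, W^{-α}(W^{-β} f) = W^{-(α+β)} f = W^{-β}(W^{-α} f). (Note that W^{-β} f is again finitely supported, so the composition is well defined.) -/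
open Polynomial Finset

/-- The Weyl sum of order `α`: `W^{-α}f(n) = ∑_{j=n}^∞ k^α(j-n)·f(j)`,
written as a sum over `j ≥ 0` of `k^α(j)·f(j+n)`.  For finitely supported `f`
this `finsum` is a genuine finite sum. -/
noncomputable def weylSum {X : Type*} [AddCommMonoid X] [Module ℝ X] (α : ℝ) (f : ℕ → X) :
    ℕ → X :=
  fun n => ∑ᶠ j : ℕ, cesK α j • f (j + n)

lemma gamma_asc (α : ℝ) (hα : 0 < α) (n : ℕ) :
    Real.Gamma ((n : ℝ) + α) = (ascPochhammer ℝ n).eval α * Real.Gamma α := by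
  induction n with
  | zero => simp
  | succ n ih =>
    have h1 : ((n + 1 : ℕ) : ℝ) + α = ((n : ℝ) + α) + 1 := by push_cast; ring
    rw [h1, Real.Gamma_add_one (by positivity), ih, ascPochhammer_succ_eval]
    push_cast; ring

lemma cesK_eq (α : ℝ) (hα : 0 < α) (n : ℕ) :
    cesK α n = (ascPochhammer ℝ n).eval α / (n.factorial : ℝ) := by
  have h2 : (n : ℝ) + 1 = ((n : ℕ) : ℝ) + 1 := by norm_num
  have hG : Real.Gamma α ≠ 0 := ne_of_gt (Real.Gamma_pos_of_pos hα)
  have hF : (n.factorial : ℝ) ≠ 0 := Nat.cast_ne_zero.2 (Nat.factorial_ne_zero n)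
  rw [cesK, gamma_asc α hα n, Real.Gamma_nat_eq_factorial n]
  field_simp

lemma descP_smeval_eq_eval (k : ℕ) (r : ℝ) :
    (descPochhammer ℤ k).smeval r = (descPochhammer ℝ k).eval r := by
  rw [Polynomial.descPochhammer_smeval_eq_ascPochhammer,
    Polynomial.ascPochhammer_smeval_eq_eval, ← descPochhammer_eval_eq_ascPochhammer]

lemma desc_eval_neg (k : ℕ) (x : ℝ) :
    (descPochhammer ℝ k).eval (-x) = (-1 : ℝ) ^ k * (ascPochhammer ℝ k).eval x := by
  have := ascPochhammer_eval_neg_eq_descPochhammer (R := ℝ) (-x) k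
  rw [neg_neg] at this
  rw [this, ← mul_assoc, ← mul_pow]
  norm_num

lemma asc_vandermonde (m : ℕ) (α β : ℝ) :
    (ascPochhammer ℝ m).eval (α + β) = ∑ ij ∈ Finset.HasAntidiagonal.antidiagonal m,
      (m.choose ij.1 : ℝ) * ((ascPochhammer ℝ ij.1).eval α * (ascPochhammer ℝ ij.2).eval β) := by
  have key := Ring.descPochhammer_smeval_add (R := ℝ) (r := -α) (s := -β) m (Commute.all _ _)
  simp only [descP_smeval_eq_eval] at key
  have h1 : (-α) + (-β) = -(α + β) := by ring
  rw [h1, desc_eval_neg] at key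
  have h2 : (ascPochhammer ℝ m).eval (α + β)
      = (-1 : ℝ) ^ m * ((-1 : ℝ) ^ m * (ascPochhammer ℝ m).eval (α + β)) := by
    rw [← mul_assoc, ← mul_pow]; norm_num
  rw [h2, key, Finset.mul_sum]
  refine Finset.sum_congr rfl fun ij hij => ?_
  rw [Finset.HasAntidiagonal.mem_antidiagonal] at hij
  rw [desc_eval_neg, desc_eval_neg]
  rw [← hij, pow_add]
  ring_nf
  simp [pow_mul', neg_one_sq]

lemma cesK_conv (α β : ℝ) (hα : 0 < α) (hβ : 0 < β) (m : ℕ) :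
    cesK (α + β) m = ∑ ij ∈ Finset.HasAntidiagonal.antidiagonal m, cesK α ij.1 * cesK β ij.2 := by
  rw [cesK_eq _ (by positivity), asc_vandermonde, Finset.sum_div]
  refine Finset.sum_congr rfl fun ij hij => ?_
  rw [Finset.HasAntidiagonal.mem_antidiagonal] at hij
  rw [cesK_eq _ hα, cesK_eq _ hβ]
  have hfac : (ij.1.factorial : ℝ) * ij.2.factorial * (m.choose ij.1) = m.factorial := by
    rw [← Nat.cast_mul, ← Nat.cast_mul, mul_comm (ij.1.factorial * ij.2.factorial)]
    norm_cast
    rw [← hij]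
    exact Nat.choose_mul_factorial_mul_factorial (Nat.le_add_right _ _) ▸ by
      rw [← Nat.add_sub_cancel_left ij.1 ij.2] at *
      simpa [mul_assoc] using Nat.choose_mul_factorial_mul_factorial
        (Nat.le.intro rfl : ij.1 ≤ ij.1 + ij.2)
  field_simp
  rw [← hfac]
  ring


lemma weylSum_eq_sum {X : Type*} [AddCommGroup X] [Module ℝ X] (α : ℝ) (f : ℕ → X)
    {N : ℕ} (hN : ∀ j, N ≤ j → f j = 0) (n : ℕ) :
    weylSum α f n = ∑ j ∈ Finset.range N, cesK α j • f (j + n) := by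
  apply finsum_eq_finset_sum_of_support_subset
  intro j hj
  simp only [Function.mem_support] at hj
  simp only [Finset.coe_range, Set.mem_Iio]
  by_contra h
  push_neg at h
  exact hj (by rw [hN (j + n) (le_trans h (Nat.le_add_right _ _)), smul_zero])

lemma weylSum_vanish {X : Type*} [AddCommGroup X] [Module ℝ X] (α : ℝ) (f : ℕ → X)
    {N : ℕ} (hN : ∀ j, N ≤ j → f j = 0) : ∀ m, N ≤ m → weylSum α f m = 0 := by
  intro m hm
  rw [weylSum]
  apply finsum_eq_zero_of_forall_eq_zero
  intro j
  rw [hN (j + m) (le_trans hm (Nat.le_add_left _ _)), smul_zero]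

lemma weylSum_comp {X : Type*} [AddCommGroup X] [Module ℝ X] (f : ℕ → X)
    (hf : (Function.support f).Finite) (α β : ℝ) (hα : 0 < α) (hβ : 0 < β) :
    weylSum α (weylSum β f) = weylSum (α + β) f := by
  set N : ℕ := hf.toFinset.sup id + 1 with hNdef
  have hN : ∀ j, N ≤ j → f j = 0 := by
    intro j hj
    by_contra hfj
    have : j ∈ hf.toFinset := hf.mem_toFinset.2 hfj
    have : j ≤ hf.toFinset.sup id := Finset.le_sup (f := id) this
    rw [hNdef] at hj
    omega
  funext n
  set T : ℕ × ℕ → X := fun p => (cesK α p.1 * cesK β p.2) • f (p.1 + p.2 + n) with hT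
  have lhs_eq : weylSum α (weylSum β f) n = ∑ p ∈ Finset.range N ×ˢ Finset.range N, T p := by
    rw [weylSum_eq_sum α (weylSum β f) (weylSum_vanish β f hN) n, Finset.sum_product]
    refine Finset.sum_congr rfl fun i _ => ?_
    rw [weylSum_eq_sum β f hN (i + n), Finset.smul_sum]
    refine Finset.sum_congr rfl fun j _ => ?_
    rw [smul_smul, hT]
    simp only []
    have h3 : j + (i + n) = i + j + n := by omega
    rw [h3]
  have rhs_eq : weylSum (α + β) f n
      = ∑ p ∈ (Finset.range N).biUnion Finset.HasAntidiagonal.antidiagonal, T p := by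
    have hdisj : (↑(Finset.range N) : Set ℕ).PairwiseDisjoint Finset.HasAntidiagonal.antidiagonal := by
      intro a _ b _ hab
      simp only [Function.onFun]
      rw [Finset.disjoint_left]
      intro p hpa hpb
      rw [Finset.HasAntidiagonal.mem_antidiagonal] at hpa hpb
      exact hab (hpa ▸ hpb)
    rw [Finset.sum_biUnion hdisj, weylSum_eq_sum (α + β) f hN n]
    refine Finset.sum_congr rfl fun m _ => ?_
    rw [cesK_conv α β hα hβ m, Finset.sum_smul]
    refine Finset.sum_congr rfl fun p hp => ?_
    rw [Finset.HasAntidiagonal.mem_antidiagonal] at hp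
    rw [hT]
    simp only []
    rw [hp]
  rw [lhs_eq, rhs_eq]
  refine (Finset.sum_subset ?_ ?_).symm
  · intro p hp
    simp only [Finset.mem_biUnion, Finset.HasAntidiagonal.mem_antidiagonal, Finset.mem_range] at hp
    obtain ⟨m, hm, hpm⟩ := hp
    simp only [Finset.mem_product, Finset.mem_range]
    omega
  · intro p _ hp
    simp only [Finset.mem_biUnion, Finset.HasAntidiagonal.mem_antidiagonal, Finset.mem_range] at hp
    push_neg at hp
    have : N ≤ p.1 + p.2 := by
      by_contra h
      exact absurd rfl (hp (p.1 + p.2) (by omega))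
    rw [hT]
    simp only []
    rw [hN (p.1 + p.2 + n) (by omega), smul_zero]

theorem stmt2 {X : Type*} [NormedAddCommGroup X] [NormedSpace ℂ X] [CompleteSpace X]
    (f : ℕ → X) (hf : (Function.support f).Finite) (α β : ℝ) (hα : 0 < α) (hβ : 0 < β) :
    weylSum α (weylSum β f) = weylSum (α + β) f ∧
      weylSum (α + β) f = weylSum β (weylSum α f) := by
  refine ⟨weylSum_comp f hf α β hα hβ, ?_⟩
  rw [add_comm α β]
  exact (weylSum_comp f hf β α hβ hα).symm
end

section
/- Let X be a complex Banach space and f : ℕ₀ → X a finitely supported sequence. Then for all α, β ∈ ℝ, W^α(W^β f) = W^{α+β} f = W^β(W^α f), where for γ > 0 the operator W^γ is the Weyl difference of order γ, for γ < 0 it is the Weyl sum W^{-|γ|}, and W^0 is the identity. -/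
/-- The forward difference operator `Δh(n) = h(n+1) - h(n)`. -/
def fdiff {X : Type*} [AddCommGroup X] (f : ℕ → X) : ℕ → X := fun n => f (n + 1) - f n

/-- The Weyl difference of order `α > 0`:
`W^α f(n) = (-1)^m Δ^m W^{-(m-α)} f(n)` with `m = [α]+1`; and `W^0 f = f`. -/
noncomputable def weylDiff {X : Type*} [AddCommGroup X] [Module ℝ X] (α : ℝ) (f : ℕ → X) :
    ℕ → X :=
  if α = 0 then f
  else ((-1 : ℝ) ^ (⌊α⌋₊ + 1)) • fdiff^[⌊α⌋₊ + 1] (weylSum ((⌊α⌋₊ : ℝ) + 1 - α) f)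

/-- The Weyl operator `W^α` for arbitrary real `α`: the Weyl difference of order `α`
for `α > 0`, the identity for `α = 0`, and the Weyl sum `W^{-|α|}` for `α < 0`. -/
noncomputable def weylOp {X : Type*} [AddCommGroup X] [Module ℝ X] (α : ℝ) (f : ℕ → X) :
    ℕ → X :=
  if 0 < α then weylDiff α f
  else if α < 0 then weylSum (-α) f
  else f

namespace WeylAux

noncomputable def K (γ : ℝ) (n : ℕ) : ℝ :=
  (ascPochhammer ℝ n).eval γ / (n.factorial : ℝ)

lemma K_zero (γ : ℝ) : K γ 0 = 1 := by simp [K]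

lemma K_succ (γ : ℝ) (n : ℕ) : ((n : ℝ) + 1) * K γ (n + 1) = (γ + n) * K γ n := by
  have h : (n.factorial : ℝ) ≠ 0 := Nat.cast_ne_zero.2 n.factorial_ne_zero
  simp only [K, ascPochhammer_succ_eval, Nat.factorial_succ, Nat.cast_mul, Nat.cast_add,
    Nat.cast_one]
  field_simp

lemma K_of_nat_zero {n : ℕ} (hn : n ≠ 0) : K 0 n = 0 := by
  simp [K, ascPochhammer_eval_zero, hn]

lemma K_neg_one_zero : K (-1) 0 = 1 := K_zero _

lemma K_neg_one_one : K (-1) 1 = -1 := by simp [K]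

lemma K_neg_one_ge_two {n : ℕ} (hn : 2 ≤ n) : K (-1) n = 0 := by
  obtain ⟨m, rfl⟩ : ∃ m, n = m + 2 := ⟨n - 2, by omega⟩
  have : (ascPochhammer ℝ (m + 2)).eval (-1) = 0 := by
    rw [ascPochhammer_succ_left]
    simp [Polynomial.eval_comp, ascPochhammer_eval_zero]
  simp [K, this]

lemma K_vandermonde (x y : ℝ) (n : ℕ) :
    ∑ p ∈ Finset.HasAntidiagonal.antidiagonal n, K x p.1 * K y p.2 = K (x + y) n := by
  induction n with
  | zero => simp [K_zero]
  | succ n ih =>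
    have key : ((n : ℝ) + 1) * ∑ p ∈ Finset.HasAntidiagonal.antidiagonal (n + 1), K x p.1 * K y p.2
        = (x + y + n) * ∑ p ∈ Finset.HasAntidiagonal.antidiagonal n, K x p.1 * K y p.2 := by
      have h1 : ((n : ℝ) + 1) * ∑ p ∈ Finset.HasAntidiagonal.antidiagonal (n + 1), K x p.1 * K y p.2
          = (∑ p ∈ Finset.HasAntidiagonal.antidiagonal (n + 1), (p.1 : ℝ) * (K x p.1 * K y p.2))
            + ∑ p ∈ Finset.HasAntidiagonal.antidiagonal (n + 1), (p.2 : ℝ) * (K x p.1 * K y p.2) := by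
        rw [Finset.mul_sum, ← Finset.sum_add_distrib]
        refine Finset.sum_congr rfl fun p hp => ?_
        have hp' : p.1 + p.2 = n + 1 := Finset.HasAntidiagonal.mem_antidiagonal.1 hp
        have : ((n : ℝ) + 1) = (p.1 : ℝ) + p.2 := by
          have : ((p.1 + p.2 : ℕ) : ℝ) = ((n + 1 : ℕ) : ℝ) := by rw [hp']
          push_cast at this; linarith
        rw [this]; ring
      have h2 : (∑ p ∈ Finset.HasAntidiagonal.antidiagonal (n + 1), (p.1 : ℝ) * (K x p.1 * K y p.2))
          = ∑ p ∈ Finset.HasAntidiagonal.antidiagonal n, (x + p.1) * (K x p.1 * K y p.2) := by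
        rw [Finset.Nat.sum_antidiagonal_succ
          (f := fun p => (p.1 : ℝ) * (K x p.1 * K y p.2))]
        simp only [Nat.cast_zero, zero_mul, zero_add]
        refine Finset.sum_congr rfl fun p hp => ?_
        have := K_succ x p.1
        push_cast
        calc ((p.1 : ℝ) + 1) * (K x (p.1 + 1) * K y p.2)
            = (((p.1 : ℝ) + 1) * K x (p.1 + 1)) * K y p.2 := by ring
          _ = ((x + p.1) * K x p.1) * K y p.2 := by rw [this]
          _ = (x + p.1) * (K x p.1 * K y p.2) := by ring
      have h3 : (∑ p ∈ Finset.HasAntidiagonal.antidiagonal (n + 1), (p.2 : ℝ) * (K x p.1 * K y p.2))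
          = ∑ p ∈ Finset.HasAntidiagonal.antidiagonal n, (y + p.2) * (K x p.1 * K y p.2) := by
        rw [Finset.Nat.sum_antidiagonal_succ'
          (f := fun p => (p.2 : ℝ) * (K x p.1 * K y p.2))]
        simp only [Nat.cast_zero, zero_mul, zero_add]
        refine Finset.sum_congr rfl fun p hp => ?_
        have := K_succ y p.2
        push_cast
        calc ((p.2 : ℝ) + 1) * (K x p.1 * K y (p.2 + 1))
            = (((p.2 : ℝ) + 1) * K y (p.2 + 1)) * K x p.1 := by ring
          _ = ((y + p.2) * K y p.2) * K x p.1 := by rw [this]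
          _ = (y + p.2) * (K x p.1 * K y p.2) := by ring
      rw [h1, h2, h3, ← Finset.sum_add_distrib, Finset.mul_sum]
      refine Finset.sum_congr rfl fun p hp => ?_
      have hp' : p.1 + p.2 = n := Finset.HasAntidiagonal.mem_antidiagonal.1 hp
      have : (x + p.1) + (y + p.2) = x + y + n := by
        have : ((p.1 + p.2 : ℕ) : ℝ) = ((n : ℕ) : ℝ) := by rw [hp']
        push_cast at this; linarith
      rw [← add_mul, this]
    have hK := K_succ (x + y) n
    have hne : ((n : ℝ) + 1) ≠ 0 := by positivity
    rw [ih] at key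
    rw [← hK] at key
    exact mul_left_cancel₀ hne key


variable {X : Type*} [AddCommGroup X] [Module ℝ X]

noncomputable def T (γ : ℝ) (f : ℕ → X) : ℕ → X := fun n => ∑ᶠ j : ℕ, K γ j • f (j + n)



lemma T_eq_sum {f : ℕ → X} {N : ℕ} (h : ∀ m, N ≤ m → f m = 0) (γ : ℝ) (n : ℕ) :
    T γ f n = ∑ j ∈ Finset.range N, K γ j • f (j + n) := by
  apply finsum_eq_finset_sum_of_support_subset
  intro j hj
  simp only [Function.mem_support] at hj
  simp only [Finset.coe_range, Set.mem_Iio]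
  by_contra hjN
  push_neg at hjN
  exact hj (by rw [h (j + n) (by omega), smul_zero])

lemma T_bound {f : ℕ → X} {N : ℕ} (h : ∀ m, N ≤ m → f m = 0) (γ : ℝ) :
    ∀ m, N ≤ m → T γ f m = 0 := by
  intro m hm
  rw [T_eq_sum h]
  exact Finset.sum_eq_zero fun j _ => by rw [h (j + m) (by omega), smul_zero]

lemma T_semigroup {f : ℕ → X} {N : ℕ} (h : ∀ m, N ≤ m → f m = 0) (γ δ : ℝ) :
    T γ (T δ f) = T (γ + δ) f := by
  funext n
  have h2 : ∀ m, 2 * N ≤ m → f m = 0 := fun m hm => h m (by omega)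
  have lhs : T γ (T δ f) n
      = ∑ p ∈ Finset.range N ×ˢ Finset.range N, (K δ p.1 * K γ p.2) • f (p.1 + p.2 + n) := by
    rw [T_eq_sum (T_bound h δ) γ n]
    rw [Finset.sum_product]
    rw [Finset.sum_comm]
    refine Finset.sum_congr rfl fun j _ => ?_
    rw [T_eq_sum h δ (j + n), Finset.smul_sum]
    refine Finset.sum_congr rfl fun i _ => ?_
    rw [smul_smul, mul_comm, ← add_assoc]
  have rhs : T (γ + δ) f n
      = ∑ q ∈ (Finset.range (2 * N)).sigma (fun m => Finset.HasAntidiagonal.antidiagonal m),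
          (K δ q.2.1 * K γ q.2.2) • f (q.2.1 + q.2.2 + n) := by
    rw [T_eq_sum h2 (γ + δ) n, Finset.sum_sigma]
    refine Finset.sum_congr rfl fun m _ => ?_
    have hv : K (γ + δ) m = ∑ p ∈ Finset.HasAntidiagonal.antidiagonal m, K δ p.1 * K γ p.2 := by
      rw [K_vandermonde, add_comm]
    rw [hv, Finset.sum_smul]
    refine Finset.sum_congr rfl fun p hp => ?_
    rw [← Finset.HasAntidiagonal.mem_antidiagonal.1 hp]
  rw [lhs, rhs]
  have step : ∑ q ∈ (Finset.range (2 * N)).sigma (fun m => Finset.HasAntidiagonal.antidiagonal m),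
          (K δ q.2.1 * K γ q.2.2) • f (q.2.1 + q.2.2 + n)
      = ∑ p ∈ (Finset.range (2 * N) ×ˢ Finset.range (2 * N)).filter
            (fun p => p.1 + p.2 < 2 * N),
          (K δ p.1 * K γ p.2) • f (p.1 + p.2 + n) := by
    refine Finset.sum_nbij' (fun q => q.2) (fun p => ⟨p.1 + p.2, p⟩) ?_ ?_ ?_ ?_ ?_
    · rintro ⟨m, p⟩ hq
      simp only [Finset.mem_sigma, Finset.mem_range, Finset.HasAntidiagonal.mem_antidiagonal] at hq
      dsimp only
      simp only [Finset.mem_filter, Finset.mem_product, Finset.mem_range]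
      omega
    · intro p hp
      simp only [Finset.mem_filter, Finset.mem_product, Finset.mem_range] at hp
      exact Finset.mem_sigma.2 ⟨Finset.mem_range.2 (show p.1 + p.2 < 2 * N by omega), Finset.HasAntidiagonal.mem_antidiagonal.2 rfl⟩
    · rintro ⟨m, p⟩ hq
      simp only [Finset.mem_sigma, Finset.mem_range, Finset.HasAntidiagonal.mem_antidiagonal] at hq
      dsimp only
      rw [hq.2]
    · intro p _; rfl
    · intro q _; rfl
  rw [step]
  apply Finset.sum_subset
  · intro p hp
    simp only [Finset.mem_product, Finset.mem_range] at hp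
    simp only [Finset.mem_filter, Finset.mem_product, Finset.mem_range]
    omega
  · intro p hp hnp
    simp only [Finset.mem_filter, Finset.mem_product, Finset.mem_range] at hp
    simp only [Finset.mem_product, Finset.mem_range] at hnp
    rw [h (p.1 + p.2 + n) (by omega), smul_zero]

lemma T_zero (f : ℕ → X) : T 0 f = f := by
  funext n
  have : T 0 f n = ∑ j ∈ Finset.range 1, K 0 j • f (j + n) := by
    apply finsum_eq_finset_sum_of_support_subset
    intro j hj
    simp only [Function.mem_support] at hj
    simp only [Finset.coe_range, Set.mem_Iio]
    by_contra hjN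
    push_neg at hjN
    exact hj (by rw [K_of_nat_zero (by omega), zero_smul])
  rw [this]
  simp [K_zero]

lemma T_neg_one (f : ℕ → X) (n : ℕ) : T (-1) f n = f n - f (n + 1) := by
  have : T (-1) f n = ∑ j ∈ Finset.range 2, K (-1) j • f (j + n) := by
    apply finsum_eq_finset_sum_of_support_subset
    intro j hj
    simp only [Function.mem_support] at hj
    simp only [Finset.coe_range, Set.mem_Iio]
    by_contra hjN
    push_neg at hjN
    exact hj (by rw [K_neg_one_ge_two (by omega), zero_smul])
  rw [this, Finset.sum_range_succ, Finset.sum_range_one]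
  rw [K_zero, K_neg_one_one, one_smul, neg_one_smul]
  rw [show 1 + n = n + 1 from by omega, show 0 + n = n from by omega]
  abel

lemma T_smul (γ c : ℝ) (f : ℕ → X) : T γ (c • f) = c • T γ f := by
  funext n
  show (∑ᶠ j : ℕ, K γ j • (c • f) (j + n)) = c • ∑ᶠ j : ℕ, K γ j • f (j + n)
  rw [smul_finsum]
  exact finsum_congr fun j => by rw [Pi.smul_apply, smul_comm]

lemma gamma_asc {α : ℝ} (hα : 0 < α) (n : ℕ) :
    Real.Gamma ((n : ℝ) + α) = Real.Gamma α * (ascPochhammer ℝ n).eval α := by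
  induction n with
  | zero => simp
  | succ n ih =>
    have hne : (n : ℝ) + α ≠ 0 := by positivity
    have : ((n + 1 : ℕ) : ℝ) + α = ((n : ℝ) + α) + 1 := by push_cast; ring
    rw [this, Real.Gamma_add_one hne, ih, ascPochhammer_succ_eval]
    ring

lemma cesK_eq_K {α : ℝ} (hα : 0 < α) (n : ℕ) : cesK α n = K α n := by
  have hΓ : Real.Gamma α ≠ 0 := (Real.Gamma_pos_of_pos hα).ne'
  rw [cesK, K, gamma_asc hα, Real.Gamma_nat_eq_factorial, mul_div_mul_left _ _ hΓ]

lemma weylSum_eq_T {α : ℝ} (hα : 0 < α) (f : ℕ → X) : weylSum α f = T α f := by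
  funext n
  exact finsum_congr fun j => by rw [cesK_eq_K hα]

lemma fdiff_eq (g : ℕ → X) : fdiff g = (-1 : ℝ) • T (-1) g := by
  funext n
  rw [Pi.smul_apply, T_neg_one, fdiff, neg_one_smul]
  abel

lemma fdiff_iter {f : ℕ → X} {N : ℕ} (h : ∀ m, N ≤ m → f m = 0) (k : ℕ) :
    fdiff^[k] f = ((-1 : ℝ) ^ k) • T (-(k : ℝ)) f := by
  induction k with
  | zero => simp [T_zero]
  | succ k ih =>
    rw [Function.iterate_succ_apply', ih, fdiff_eq, T_smul, smul_smul, ← pow_succ',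
      T_semigroup h]
    congr 1
    push_cast
    ring

lemma weylOp_eq_T {f : ℕ → X} {N : ℕ} (h : ∀ m, N ≤ m → f m = 0) (α : ℝ) :
    weylOp α f = T (-α) f := by
  rcases lt_trichotomy α 0 with hα | rfl | hα
  · rw [weylOp, if_neg (by linarith), if_pos hα, weylSum_eq_T (by linarith)]
  · rw [weylOp, if_neg (lt_irrefl 0), if_neg (lt_irrefl 0), neg_zero, T_zero]
  · rw [weylOp, if_pos hα, weylDiff, if_neg hα.ne']
    have hmα : 0 < (⌊α⌋₊ : ℝ) + 1 - α := by
      have := Nat.lt_floor_add_one α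
      linarith
    rw [weylSum_eq_T hmα, fdiff_iter (T_bound h _), T_semigroup h, smul_smul, ← pow_add,
      Even.neg_one_pow ⟨⌊α⌋₊ + 1, by ring⟩, one_smul]
    congr 1
    push_cast
    ring

end WeylAux

theorem stmt4 {X : Type*} [NormedAddCommGroup X] [NormedSpace ℂ X] [CompleteSpace X]
    (f : ℕ → X) (hf : (Function.support f).Finite) (α β : ℝ) :
    weylOp α (weylOp β f) = weylOp (α + β) f ∧
      weylOp (α + β) f = weylOp β (weylOp α f) := by
  obtain ⟨b, hb⟩ := hf.bddAbove
  have h : ∀ m, b + 1 ≤ m → f m = 0 := by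
    intro m hm
    by_contra hne
    exact absurd (hb (Function.mem_support.2 hne)) (by omega)
  have key : ∀ γ δ : ℝ, weylOp γ (weylOp δ f) = weylOp (γ + δ) f := by
    intro γ δ
    rw [WeylAux.weylOp_eq_T h δ, WeylAux.weylOp_eq_T (WeylAux.T_bound h (-δ)) γ,
      WeylAux.T_semigroup h, WeylAux.weylOp_eq_T h (γ + δ)]
    congr 1
    ring
  exact ⟨key α β, by rw [key β α, add_comm]⟩
end

section
/- Let α > 0 and λ ∈ ℂ with |λ| > 1, and define p_λ(n) = λ^{-(n+1)} for n ∈ ℕ₀. Then for every n ∈ ℕ₀ the series ∑_{j=n}^∞ k^α(j-n)·p_λ(j) converges absolutely and W^{-α} p_λ(n) = (1 − λ^{-1})^{-α} · p_λ(n), where the power is the principal complex power. Moreover, defining W^α p_λ(n) = (-1)^m Δ^m W^{-(m-α)} p_λ(n) with m = [α]+1 (all series involved converging absolutely), one has W^α p_λ(n) = (1 − λ^{-1})^α · p_λ(n) for all n ∈ ℕ₀. -/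
/-- The Weyl sum of order `β` for complex sequences, as a `tsum`:
`W^{-β}f(n) = ∑_{j=n}^∞ k^β(j-n)·f(j)`. -/
noncomputable def WtSum (β : ℝ) (f : ℕ → ℂ) (n : ℕ) : ℂ :=
  ∑' j : ℕ, (cesK β j : ℂ) * f (j + n)

/-- The forward difference operator `Δh(n) = h(n+1) - h(n)`. -/
def cdiff (f : ℕ → ℂ) : ℕ → ℂ := fun n => f (n + 1) - f n

open Filter Topology

lemma cesK_pos {α : ℝ} (hα : 0 < α) (n : ℕ) : 0 < cesK α n := by
  unfold cesK
  have h1 : (0:ℝ) < (n:ℝ) + α := by positivity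
  have h2 : (0:ℝ) < (n:ℝ) + 1 := by positivity
  exact div_pos (Real.Gamma_pos_of_pos h1)
    (mul_pos (Real.Gamma_pos_of_pos hα) (Real.Gamma_pos_of_pos h2))

lemma cesK_zero {α : ℝ} (hα : 0 < α) : cesK α 0 = 1 := by
  unfold cesK
  simp [Real.Gamma_one, div_self (Real.Gamma_pos_of_pos hα).ne']

lemma cesK_succ {α : ℝ} (hα : 0 < α) (n : ℕ) :
    ((n:ℝ) + 1) * cesK α (n + 1) = ((n:ℝ) + α) * cesK α n := by
  have hΓα := (Real.Gamma_pos_of_pos hα).ne'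
  have hn1 : (0:ℝ) < (n:ℝ) + 1 := by positivity
  have hnα : (0:ℝ) < (n:ℝ) + α := by positivity
  have hΓn := (Real.Gamma_pos_of_pos hn1).ne'
  have e1 : ((n+1 : ℕ) : ℝ) + α = ((n:ℝ) + α) + 1 := by push_cast; ring
  have e2 : ((n+1 : ℕ) : ℝ) + 1 = ((n:ℝ) + 1) + 1 := by push_cast; ring
  unfold cesK
  rw [e1, e2, Real.Gamma_add_one hnα.ne', Real.Gamma_add_one hn1.ne']
  field_simp

lemma ratio_tendsto (α : ℝ) :
    Tendsto (fun n : ℕ => ((n:ℝ) + α)/((n:ℝ)+1)) atTop (𝓝 1) := by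
  have h : ∀ n : ℕ, ((n:ℝ)+α)/((n:ℝ)+1) = 1 + (α - 1) * (1/((n:ℝ)+1)) := by
    intro n
    have : ((n:ℝ)+1) ≠ 0 := by positivity
    field_simp
    ring
  simp_rw [h]
  have := (tendsto_one_div_add_atTop_nhds_zero_nat).const_mul (α - 1)
  simpa using tendsto_const_nhds.add this

lemma cesK_norm_summable {α : ℝ} (hα : 0 < α) {z : ℂ} (hz : ‖z‖ < 1) :
    Summable (fun j : ℕ => ‖(cesK α j : ℂ) * z ^ j‖) := by
  rcases eq_or_ne z 0 with rfl | hz0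
  · apply summable_of_ne_finset_zero (s := {0})
    intro j hj
    simp only [Finset.mem_singleton] at hj
    simp [zero_pow hj]
  · rw [summable_norm_iff]
    have hkey : ∀ n : ℕ, ‖(cesK α (n+1) : ℂ) * z ^ (n+1)‖ / ‖(cesK α n : ℂ) * z ^ n‖
        = (((n:ℝ)+α)/((n:ℝ)+1)) * ‖z‖ := by
      intro n
      have hcn := cesK_pos hα n
      have hcn1 := cesK_pos hα (n+1)
      have hs : (0:ℝ) < ‖z‖ := norm_pos_iff.mpr hz0
      have hrec : cesK α (n+1) = ((n:ℝ)+α)/((n:ℝ)+1) * cesK α n := by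
        have h := cesK_succ hα n
        have hn1 : ((n:ℝ)+1) ≠ 0 := by positivity
        field_simp
        linarith [h]
      rw [norm_mul, norm_mul, norm_pow, norm_pow, Complex.norm_real, Complex.norm_real,
        Real.norm_eq_abs, Real.norm_eq_abs, abs_of_pos hcn, abs_of_pos hcn1, hrec, pow_succ,
        div_eq_iff (mul_pos hcn (pow_pos hs n)).ne']
      ring
    apply summable_of_ratio_test_tendsto_lt_one hz
    · filter_upwards with n
      exact mul_ne_zero (by exact_mod_cast (cesK_pos hα n).ne') (pow_ne_zero _ hz0)
    · simp_rw [hkey]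
      simpa using (ratio_tendsto α).mul_const ‖z‖

lemma u_summable {α r : ℝ} (hα : 0 < α) (hr0 : 0 < r) (hr1 : r < 1) :
    Summable (fun n : ℕ => (n:ℝ) * cesK α n * r ^ (n-1)) := by
  apply summable_of_ratio_test_tendsto_lt_one hr1
  · filter_upwards [eventually_ge_atTop 1] with n hn
    have h1 : (0:ℝ) < (n:ℝ) := by exact_mod_cast hn
    have h2 := cesK_pos hα n
    have h3 := pow_pos hr0 (n-1)
    positivity
  · have hev : (fun n : ℕ => ‖(↑(n+1):ℝ) * cesK α (n+1) * r ^ ((n+1)-1)‖ /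
        ‖(n:ℝ) * cesK α n * r ^ (n-1)‖) =ᶠ[atTop]
        (fun n : ℕ => (((n:ℝ) + α)/((n:ℝ)+1)) * ((((n:ℝ)+1))/(n:ℝ)) * r) := by
      filter_upwards [eventually_ge_atTop 1] with n hn
      obtain ⟨k, rfl⟩ : ∃ k, n = k + 1 := ⟨n - 1, (Nat.succ_pred_eq_of_pos hn).symm⟩
      have hc1 := cesK_pos hα (k+1)
      have hc2 := cesK_pos hα (k+1+1)
      have hrecc := cesK_succ hα (k+1)
      have hp1 : (0:ℝ) < (↑(k+1+1):ℝ) * cesK α (k+1+1) * r ^ ((k+1+1)-1) := by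
        have h1 : (0:ℝ) < (↑(k+1+1):ℝ) := by positivity
        have := pow_pos hr0 ((k+1+1)-1)
        positivity
      have hp2 : (0:ℝ) < (↑(k+1):ℝ) * cesK α (k+1) * r ^ ((k+1)-1) := by
        have h1 : (0:ℝ) < (↑(k+1):ℝ) := by positivity
        have := pow_pos hr0 ((k+1)-1)
        positivity
      have hk1 : ((k:ℝ)+1) ≠ 0 := by positivity
      have hrk : r ^ k ≠ 0 := (pow_pos hr0 k).ne'
      have hc2eq : cesK α (k+1+1) = (((k:ℝ)+1)+α)/(((k:ℝ)+1)+1) * cesK α (k+1) := by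
        push_cast at hrecc
        have h2 : ((k:ℝ)+1+1) ≠ 0 := by positivity
        field_simp
        linarith [hrecc]
      rw [Real.norm_eq_abs, Real.norm_eq_abs, abs_of_pos hp1, abs_of_pos hp2]
      simp only [Nat.add_sub_cancel]
      rw [hc2eq, pow_succ,
        div_eq_iff (by push_cast; positivity : ((↑(k+1):ℝ) * cesK α (k+1) * r ^ k) ≠ 0)]
      push_cast
      field_simp
    apply Tendsto.congr' hev.symm
    have hA : Tendsto (fun n : ℕ => ((n:ℝ)+1)/(n:ℝ)) atTop (𝓝 1) := by
      have h := tendsto_one_div_atTop_nhds_zero_nat (𝕜 := ℝ)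
      have heq : (fun n : ℕ => ((n:ℝ)+1)/(n:ℝ)) =ᶠ[atTop] (fun n : ℕ => 1 + 1/(n:ℝ)) := by
        filter_upwards [eventually_ge_atTop 1] with n hn
        have hn0 : (n:ℝ) ≠ 0 := Nat.cast_ne_zero.mpr (by omega)
        field_simp
      rw [tendsto_congr' heq]
      simpa using tendsto_const_nhds.add h
    simpa using ((ratio_tendsto α).mul hA).mul_const r

lemma cesK_hasSum {α : ℝ} (hα : 0 < α) {z : ℂ} (hz : ‖z‖ < 1) :
    HasSum (fun j : ℕ => (cesK α j : ℂ) * z ^ j) ((1 - z) ^ (-(α:ℂ))) := by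
  set g : ℂ → ℂ := fun w => ∑' j : ℕ, (cesK α j : ℂ) * w ^ j with hgdef
  have hsum : ∀ w : ℂ, ‖w‖ < 1 → Summable (fun j : ℕ => (cesK α j : ℂ) * w ^ j) :=
    fun w hw => summable_norm_iff.mp (cesK_norm_summable hα hw)
  -- Step B: differentiability with derivative series
  have hderiv : ∀ w : ℂ, ‖w‖ < 1 →
      Summable (fun n : ℕ => (cesK α n : ℂ) * ((n:ℂ) * w ^ (n-1))) ∧
      HasDerivAt g (∑' n : ℕ, (cesK α n : ℂ) * ((n:ℂ) * w ^ (n-1))) w := by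
    intro w hw
    set r : ℝ := (‖w‖ + 1) / 2 with hrdef
    have hwr : ‖w‖ < r := by rw [hrdef]; linarith
    have hr0 : 0 < r := by rw [hrdef]; positivity
    have hr1 : r < 1 := by rw [hrdef]; linarith
    have hu := u_summable hα hr0 hr1
    have hbound : ∀ (n : ℕ) (y : ℂ), y ∈ Metric.ball (0:ℂ) r →
        ‖(cesK α n : ℂ) * ((n:ℂ) * y ^ (n-1))‖ ≤ (n:ℝ) * cesK α n * r ^ (n-1) := by
      intro n y hy
      rw [Metric.mem_ball, dist_zero_right] at hy
      rw [norm_mul, norm_mul, norm_pow, Complex.norm_real, Complex.norm_natCast,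
        Real.norm_eq_abs, abs_of_pos (cesK_pos hα n)]
      calc cesK α n * ((n:ℝ) * ‖y‖ ^ (n-1)) ≤ cesK α n * ((n:ℝ) * r ^ (n-1)) := by
            apply mul_le_mul_of_nonneg_left _ (cesK_pos hα n).le
            apply mul_le_mul_of_nonneg_left _ (Nat.cast_nonneg n)
            exact pow_le_pow_left₀ (norm_nonneg y) hy.le _
        _ = (n:ℝ) * cesK α n * r ^ (n-1) := by ring
    have hg : ∀ (n : ℕ) (y : ℂ), y ∈ Metric.ball (0:ℂ) r →
        HasDerivAt (fun y : ℂ => (cesK α n : ℂ) * y ^ n) ((cesK α n : ℂ) * ((n:ℂ) * y ^ (n-1))) y :=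
      fun n y _ => (hasDerivAt_pow n y).const_mul _
    have h0mem : (0:ℂ) ∈ Metric.ball (0:ℂ) r := Metric.mem_ball_self hr0
    have hg0 : Summable (fun n : ℕ => (cesK α n : ℂ) * (0:ℂ) ^ n) :=
      hsum 0 (by simp)
    have := hasDerivAt_tsum_of_isPreconnected hu Metric.isOpen_ball
      (convex_ball (0:ℂ) r).isPreconnected hg hbound h0mem hg0
      (by rw [Metric.mem_ball, dist_zero_right]; exact hwr)
    refine ⟨?_, this⟩
    exact hu.of_norm_bounded (fun n => hbound n w
      (by rw [Metric.mem_ball, dist_zero_right]; exact hwr))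
  -- Step C: the ODE
  have hODE : ∀ w : ℂ, ‖w‖ < 1 →
      (1 - w) * (∑' n : ℕ, (cesK α n : ℂ) * ((n:ℂ) * w ^ (n-1))) = (α:ℂ) * g w := by
    intro w hw
    set D := ∑' n : ℕ, (cesK α n : ℂ) * ((n:ℂ) * w ^ (n-1)) with hDdef
    have hDs : HasSum (fun n : ℕ => (cesK α n : ℂ) * ((n:ℂ) * w ^ (n-1))) D :=
      ((hderiv w hw).1).hasSum
    have hgs : HasSum (fun n : ℕ => (cesK α n : ℂ) * w ^ n) (g w) := (hsum w hw).hasSum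
    have h1 : HasSum (fun n : ℕ => (cesK α (n+1) : ℂ) * (((n+1:ℕ):ℂ) * w ^ ((n+1)-1))) D := by
      refine (hasSum_nat_add_iff (f := fun n : ℕ => (cesK α n : ℂ) * ((n:ℂ) * w ^ (n-1))) 1).mpr ?_
      have hz0 : (∑ i ∈ Finset.range 1, (cesK α i : ℂ) * ((i:ℂ) * w ^ (i-1))) = 0 := by simp
      rw [hz0, add_zero]
      exact hDs
    have e2 : (fun n : ℕ => w * ((cesK α n : ℂ) * ((n:ℂ) * w ^ (n-1)))) =
        fun n : ℕ => (cesK α n : ℂ) * ((n:ℂ) * w ^ n) := by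
      funext n
      cases n with
      | zero => simp
      | succ m => rw [Nat.add_sub_cancel, pow_succ]; ring
    have h2 : HasSum (fun n : ℕ => (cesK α n : ℂ) * ((n:ℂ) * w ^ n)) (w * D) :=
      e2 ▸ hDs.mul_left w
    have h3 := h1.sub h2
    have e3 : (fun n : ℕ => (cesK α (n+1) : ℂ) * (((n+1:ℕ):ℂ) * w ^ ((n+1)-1))
          - (cesK α n : ℂ) * ((n:ℂ) * w ^ n)) =
        fun n : ℕ => (α:ℂ) * ((cesK α n : ℂ) * w ^ n) := by
      funext n
      have hc := cesK_succ hα n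
      have hcC := congrArg (fun x : ℝ => (x:ℂ)) hc
      push_cast at hcC
      rw [Nat.add_sub_cancel]
      push_cast
      linear_combination w ^ n * hcC
    rw [e3] at h3
    have h4 := hgs.mul_left (α:ℂ)
    have huniq : D - w * D = (α:ℂ) * g w := h3.unique h4
    linear_combination huniq
  -- Step D: zero derivative of F
  have hF0 : ∀ w : ℂ, ‖w‖ < 1 → HasDerivAt (fun w : ℂ => (1 - w) ^ (α:ℂ) * g w) 0 w := by
    intro w hw
    set D := ∑' n : ℕ, (cesK α n : ℂ) * ((n:ℂ) * w ^ (n-1)) with hDdef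
    have hgd : HasDerivAt g D w := (hderiv w hw).2
    have hre : w.re < 1 := by
      have h := Complex.re_le_norm w
      linarith
    have hslit : (1 - w) ∈ Complex.slitPlane := by
      refine Complex.mem_slitPlane_iff.mpr (Or.inl ?_)
      simp only [Complex.sub_re, Complex.one_re]
      linarith
    have hne : (1:ℂ) - w ≠ 0 := Complex.slitPlane_ne_zero hslit
    have hpow : HasDerivAt (fun w : ℂ => (1 - w) ^ (α:ℂ))
        ((α:ℂ) * (1-w) ^ ((α:ℂ)-1) * (-1)) w :=
      ((hasDerivAt_id w).const_sub 1).cpow_const hslit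
    have hmul := hpow.mul hgd
    refine hmul.congr_deriv ?_
    symm
    have hsplit : ((1:ℂ) - w) ^ (α:ℂ) = (1-w) ^ ((α:ℂ)-1) * (1-w) := by
      rw [show (α:ℂ) = ((α:ℂ)-1) + 1 by ring]
      rw [Complex.cpow_add _ _ hne, Complex.cpow_one]
      ring_nf
    rw [hsplit]
    linear_combination (-(1:ℂ)) * (1-w) ^ ((α:ℂ)-1) * (hODE w hw)
  -- Step E: constancy
  set F := fun w : ℂ => (1 - w) ^ (α:ℂ) * g w with hFdef
  have hFconst : F z = F 0 := by
    have hdiff : DifferentiableOn ℂ F (Metric.ball 0 1) := fun w hw =>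
      ((hF0 w (by simpa [Metric.mem_ball, dist_zero_right] using hw)).differentiableAt).differentiableWithinAt
    have hzero : ∀ w ∈ Metric.ball (0:ℂ) 1, fderivWithin ℂ F (Metric.ball 0 1) w = 0 := by
      intro w hw
      rw [fderivWithin_of_mem_nhds (Metric.isOpen_ball.mem_nhds hw)]
      have h := (hF0 w (by simpa [Metric.mem_ball, dist_zero_right] using hw)).hasFDerivAt
      rw [h.fderiv]
      ext x
      simp
    exact (convex_ball (0:ℂ) 1).is_const_of_fderivWithin_eq_zero hdiff hzero
      (by simpa [Metric.mem_ball, dist_zero_right] using hz)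
      (by simp [Metric.mem_ball])
  have hg0 : g 0 = 1 := by
    rw [hgdef]
    simp only []
    rw [tsum_eq_single 0 (by intro j hj; simp [zero_pow hj])]
    simp [cesK_zero hα]
  have hF0val : F 0 = 1 := by
    rw [hFdef]
    simp [hg0, Complex.one_cpow]
  have hFz : (1 - z) ^ (α:ℂ) * g z = 1 := by
    have h := hFconst
    rw [hF0val] at h
    simpa [hFdef] using h
  have hgz : g z = ((1 - z) ^ (α:ℂ))⁻¹ := eq_inv_of_mul_eq_one_right (by linear_combination hFz)
  rw [Complex.cpow_neg, ← hgz]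
  exact (hsum z hz).hasSum

theorem stmt5 (α : ℝ) (hα : 0 < α) (lam : ℂ) (hlam : 1 < ‖lam‖)
    (p : ℕ → ℂ) (hp : ∀ n : ℕ, p n = lam ^ (-((n : ℤ) + 1))) :
    (∀ n : ℕ, Summable fun j : ℕ => ‖(cesK α j : ℂ) * p (j + n)‖) ∧
    (∀ n : ℕ, WtSum α p n = (1 - lam⁻¹) ^ (-(α : ℂ)) * p n) ∧
    (∀ n : ℕ, Summable fun j : ℕ => ‖(cesK ((⌊α⌋₊ : ℝ) + 1 - α) j : ℂ) * p (j + n)‖) ∧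
    (∀ n : ℕ,
      (-1 : ℂ) ^ (⌊α⌋₊ + 1) * cdiff^[⌊α⌋₊ + 1] (WtSum ((⌊α⌋₊ : ℝ) + 1 - α) p) n =
        (1 - lam⁻¹) ^ (α : ℂ) * p n) := by
  have hlam0 : lam ≠ 0 := by
    intro h
    rw [h] at hlam
    simp at hlam
    linarith
  have hz : ‖lam⁻¹‖ < 1 := by
    rw [norm_inv]
    exact inv_lt_one_of_one_lt₀ hlam
  have hpshift : ∀ j n : ℕ, p (j + n) = lam⁻¹ ^ j * p n := by
    intro j n
    rw [hp, hp]
    have e : (-(((j+n : ℕ) : ℤ) + 1)) = (-(j:ℤ)) + (-((n:ℤ)+1)) := by push_cast; ring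
    rw [e, zpow_add₀ hlam0]
    congr 1
    rw [zpow_neg, zpow_natCast, inv_pow]
  -- general key for any positive order β
  have key : ∀ β : ℝ, 0 < β →
      (∀ n : ℕ, Summable fun j : ℕ => ‖(cesK β j : ℂ) * p (j + n)‖) ∧
      (∀ n : ℕ, WtSum β p n = (1 - lam⁻¹) ^ (-(β : ℂ)) * p n) := by
    intro β hβ
    constructor
    · intro n
      have hs := (cesK_norm_summable hβ hz).mul_right ‖p n‖
      apply hs.congr
      intro j
      rw [hpshift j n]
      rw [← mul_assoc, norm_mul]
      simp [norm_mul]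
    · intro n
      unfold WtSum
      have e : (fun j : ℕ => (cesK β j : ℂ) * p (j + n)) =
          fun j : ℕ => ((cesK β j : ℂ) * lam⁻¹ ^ j) * p n := by
        funext j
        rw [hpshift j n, mul_assoc]
      rw [e, tsum_mul_right, (cesK_hasSum hβ hz).tsum_eq]
  set m : ℕ := ⌊α⌋₊ + 1 with hm
  have hβpos : 0 < (⌊α⌋₊ : ℝ) + 1 - α := by
    have := Nat.lt_floor_add_one α
    linarith
  have hw : (1:ℂ) - lam⁻¹ ≠ 0 := by
    intro h
    have : lam⁻¹ = 1 := by linear_combination -h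
    rw [this] at hz
    simp at hz
  refine ⟨(key α hα).1, (key α hα).2, (key _ hβpos).1, ?_⟩
  intro n
  have hval := (key _ hβpos).2
  set C : ℂ := (1 - lam⁻¹) ^ (-((((⌊α⌋₊ : ℝ) + 1 - α) : ℝ) : ℂ)) with hC
  -- iterate of cdiff on multiples of p
  have hiter : ∀ (k : ℕ) (f : ℕ → ℂ) (c : ℂ), (∀ j : ℕ, f j = c * p j) →
      ∀ j : ℕ, cdiff^[k] f j = (lam⁻¹ - 1) ^ k * c * p j := by
    intro k
    induction k with
    | zero => intro f c hf j; simpa using hf j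
    | succ k ih =>
      intro f c hf j
      rw [Function.iterate_succ_apply]
      have hstep : ∀ j : ℕ, cdiff f j = ((lam⁻¹ - 1) * c) * p j := by
        intro j
        unfold cdiff
        rw [hf, hf, show j + 1 = 1 + j by ring, hpshift 1 j]
        ring
      rw [ih (cdiff f) ((lam⁻¹ - 1) * c) hstep j]
      ring
  have hiter' := hiter m (WtSum ((⌊α⌋₊ : ℝ) + 1 - α) p) C hval n
  rw [hiter']
  have hsplitα : ((1:ℂ) - lam⁻¹) ^ (α:ℂ) = (1 - lam⁻¹) ^ (m:ℕ) * C := by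
    rw [hC, show (α:ℂ) = ((m:ℕ):ℂ) + (-((((⌊α⌋₊ : ℝ) + 1 - α) : ℝ) : ℂ)) by push_cast [hm]; ring,
      Complex.cpow_add _ _ hw, Complex.cpow_natCast]
  rw [hsplitα]
  have : ((-1:ℂ)) ^ m * (lam⁻¹ - 1) ^ m = (1 - lam⁻¹) ^ m := by
    rw [← mul_pow]
    ring_nf
  linear_combination (C * p n) * this
end

section
/- Let f, g : ℕ₀ → ℂ be finitely supported sequences and α > 0. Then ∑_{n=0}^∞ W^{-α}f(n)·g(n) = ∑_{n=0}^∞ f(n)·(k^α * g)(n) (all sums finite). Consequently, ∑_{n=0}^∞ f(n)·g(n) = ∑_{n=0}^∞ W^α f(n)·(k^α * g)(n) = ∑_{n=0}^∞ (k^α * f)(n)·W^α g(n). -/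
/-- The Cesàro sum of order `α` of a complex sequence:
`Δ^{-α}g(n) = (k^α * g)(n) = ∑_{j=0}^n k^α(n-j)·g(j)`. -/
noncomputable def cesConv (α : ℝ) (g : ℕ → ℂ) (n : ℕ) : ℂ :=
  ∑ j ∈ Finset.range (n + 1), (cesK α (n - j) : ℂ) * g j

lemma cesK_zero_s6 {γ : ℝ} (hγ : 0 < γ) : cesK γ 0 = 1 := by
  simp [cesK, Real.Gamma_one, (Real.Gamma_pos_of_pos hγ).ne']

lemma cesK_one (n : ℕ) : cesK 1 n = 1 := by
  have h : (0:ℝ) < (n:ℝ) + 1 := by positivity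
  simp [cesK, Real.Gamma_one, (Real.Gamma_pos_of_pos h).ne']

lemma cesK_rec {γ : ℝ} (hγ : 0 < γ) (n : ℕ) :
    ((n:ℝ) + 1) * cesK γ (n+1) = ((n:ℝ) + γ) * cesK γ n := by
  have h1 : ((n+1 : ℕ) : ℝ) + γ = ((n:ℝ) + γ) + 1 := by push_cast; ring
  have h2 : ((n+1 : ℕ) : ℝ) + 1 = ((n:ℝ) + 1) + 1 := by push_cast; ring
  have g1 : Real.Gamma (((n:ℝ) + γ) + 1) = ((n:ℝ) + γ) * Real.Gamma ((n:ℝ) + γ) :=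
    Real.Gamma_add_one (by positivity)
  have g2 : Real.Gamma (((n:ℝ) + 1) + 1) = ((n:ℝ) + 1) * Real.Gamma ((n:ℝ) + 1) :=
    Real.Gamma_add_one (by positivity)
  have p1 : Real.Gamma ((n:ℝ) + 1) ≠ 0 := (Real.Gamma_pos_of_pos (by positivity)).ne'
  have p2 : Real.Gamma γ ≠ 0 := (Real.Gamma_pos_of_pos hγ).ne'
  rw [cesK, cesK, h1, h2, g1, g2]
  field_simp

lemma cesK_pascal {γ : ℝ} (hγ : 0 < γ) (n : ℕ) :
    cesK (γ+1) (n+1) = cesK (γ+1) n + cesK γ (n+1) := by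
  have h1 : ((n+1 : ℕ) : ℝ) + (γ + 1) = ((n:ℝ) + γ + 1) + 1 := by push_cast; ring
  have h2 : ((n+1 : ℕ) : ℝ) + 1 = ((n:ℝ) + 1) + 1 := by push_cast; ring
  have h3 : ((n+1 : ℕ) : ℝ) + γ = ((n:ℝ) + γ) + 1 := by push_cast; ring
  have g1 : Real.Gamma (((n:ℝ) + γ + 1) + 1) = ((n:ℝ) + γ + 1) * Real.Gamma ((n:ℝ) + γ + 1) :=
    Real.Gamma_add_one (by positivity)
  have g2 : Real.Gamma (((n:ℝ) + 1) + 1) = ((n:ℝ) + 1) * Real.Gamma ((n:ℝ) + 1) :=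
    Real.Gamma_add_one (by positivity)
  have g3 : Real.Gamma ((n:ℝ) + γ + 1) = ((n:ℝ) + γ) * Real.Gamma ((n:ℝ) + γ) := by
    exact Real.Gamma_add_one (by positivity)
  have g4 : Real.Gamma (γ + 1) = γ * Real.Gamma γ := Real.Gamma_add_one hγ.ne'
  have p1 : Real.Gamma ((n:ℝ) + 1) ≠ 0 := (Real.Gamma_pos_of_pos (by positivity)).ne'
  have p2 : Real.Gamma γ ≠ 0 := (Real.Gamma_pos_of_pos hγ).ne'
  have p3 : ((n:ℝ) + 1) ≠ 0 := by positivity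
  have p4 : γ ≠ 0 := hγ.ne'
  have h4 : (n:ℝ) + (γ + 1) = ((n:ℝ) + γ) + 1 := by ring
  rw [cesK, cesK, cesK, h1, h2, h3, h4, g1, g2, g3, g4]
  set A := Real.Gamma ((n:ℝ) + γ) with hA
  set G := Real.Gamma γ with hG
  set B := Real.Gamma ((n:ℝ) + 1) with hB
  have pA : A ≠ 0 := (Real.Gamma_pos_of_pos (by positivity)).ne'
  field_simp
  ring

lemma cesK_vandermonde {γ δ : ℝ} (hγ : 0 < γ) (hδ : 0 < δ) (n : ℕ) :
    ∑ j ∈ Finset.range (n+1), cesK γ (n-j) * cesK δ j = cesK (γ+δ) n := by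
  induction n with
  | zero => simp [cesK_zero_s6 hγ, cesK_zero_s6 hδ, cesK_zero_s6 (by positivity : (0:ℝ) < γ+δ)]
  | succ n ih =>
    have hne : ((n:ℝ)+1) ≠ 0 := by positivity
    have key : ((n:ℝ)+1) * ∑ j ∈ Finset.range (n+1+1), cesK γ (n+1-j) * cesK δ j
        = ((n:ℝ)+γ+δ) * ∑ j ∈ Finset.range (n+1), cesK γ (n-j) * cesK δ j := by
      rw [Finset.mul_sum]
      have split : ∀ j ∈ Finset.range (n+1+1),
          ((n:ℝ)+1) * (cesK γ (n+1-j) * cesK δ j)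
          = (((n+1-j:ℕ):ℝ) * cesK γ (n+1-j)) * cesK δ j
            + cesK γ (n+1-j) * ((j:ℝ) * cesK δ j) := by
        intro j hj
        have hj' : j ≤ n+1 := Nat.lt_succ_iff.mp (Finset.mem_range.mp hj)
        have e : ((n+1-j:ℕ):ℝ) = (n:ℝ) + 1 - (j:ℝ) := by
          rw [Nat.cast_sub hj']; push_cast; ring
        rw [e]; ring
      rw [Finset.sum_congr rfl split, Finset.sum_add_distrib]
      have s1 : ∑ j ∈ Finset.range (n+1+1), (((n+1-j:ℕ):ℝ) * cesK γ (n+1-j)) * cesK δ j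
          = ∑ j ∈ Finset.range (n+1), ((((n-j:ℕ):ℝ)+γ) * cesK γ (n-j)) * cesK δ j := by
        rw [Finset.sum_range_succ]
        simp only [Nat.sub_self, Nat.cast_zero, zero_mul, add_zero]
        refine Finset.sum_congr rfl fun j hj => ?_
        have hj' : j ≤ n := Nat.lt_succ_iff.mp (Finset.mem_range.mp hj)
        have e1 : n+1-j = (n-j)+1 := by omega
        have e2 : ((n+1-j:ℕ):ℝ) = ((n-j:ℕ):ℝ)+1 := by rw [e1]; push_cast; ring
        rw [e2, e1, cesK_rec hγ (n-j)]
      have s2 : ∑ j ∈ Finset.range (n+1+1), cesK γ (n+1-j) * ((j:ℝ) * cesK δ j)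
          = ∑ j ∈ Finset.range (n+1), cesK γ (n-j) * ((((j:ℕ):ℝ)+δ) * cesK δ j) := by
        rw [Finset.sum_range_succ']
        simp only [Nat.cast_zero, zero_mul, mul_zero, add_zero]
        refine Finset.sum_congr rfl fun j hj => ?_
        have e1 : n+1-(j+1) = n-j := by omega
        have e2 : ((j+1:ℕ):ℝ) = ((j:ℕ):ℝ)+1 := by push_cast; ring
        rw [e1, e2, cesK_rec hδ j]
      rw [s1, s2, ← Finset.sum_add_distrib, Finset.mul_sum]
      refine Finset.sum_congr rfl fun j hj => ?_
      have hj' : j ≤ n := Nat.lt_succ_iff.mp (Finset.mem_range.mp hj)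
      have e : ((n-j:ℕ):ℝ) = (n:ℝ) - (j:ℝ) := by rw [Nat.cast_sub hj']
      rw [e]; ring
    have hrec := cesK_rec (γ := γ+δ) (by positivity) n
    have : ((n:ℝ)+1) * ∑ j ∈ Finset.range (n+1+1), cesK γ (n+1-j) * cesK δ j
        = ((n:ℝ)+1) * cesK (γ+δ) (n+1) := by
      rw [key, ih, hrec]; ring
    exact mul_left_cancel₀ hne this


noncomputable def nablaC (G : ℕ → ℂ) : ℕ → ℂ :=
  fun n => G n - if n = 0 then 0 else G (n-1)

lemma tri_swap (N : ℕ) (F : ℕ → ℕ → ℂ) :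
    ∑ j ∈ Finset.range N, ∑ i ∈ Finset.range (j+1), F j i
    = ∑ i ∈ Finset.range N, ∑ j ∈ Finset.Ico i N, F j i := by
  have h1 : ∀ j ∈ Finset.range N, ∑ i ∈ Finset.range (j+1), F j i
      = ∑ i ∈ Finset.range N, if i ≤ j then F j i else 0 := by
    intro j hj
    rw [← Finset.sum_filter]
    refine (Finset.sum_congr ?_ fun _ _ => rfl)
    ext i
    simp only [Finset.mem_range, Finset.mem_filter, Nat.lt_succ_iff]
    exact ⟨fun h => ⟨lt_of_le_of_lt h (Finset.mem_range.mp hj), h⟩, fun h => h.2⟩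
  rw [Finset.sum_congr rfl h1, Finset.sum_comm]
  refine Finset.sum_congr rfl fun i hi => ?_
  rw [← Finset.sum_filter]
  refine (Finset.sum_congr ?_ fun _ _ => rfl)
  ext j
  simp only [Finset.mem_filter, Finset.mem_range, Finset.mem_Ico]
  tauto

lemma nablaC_cesConv_succ {γ : ℝ} (hγ : 0 < γ) (g : ℕ → ℂ) :
    nablaC (cesConv (γ+1) g) = cesConv γ g := by
  funext n
  cases n with
  | zero =>
    simp [nablaC, cesConv, cesK_zero_s6 hγ, cesK_zero_s6 (by positivity : (0:ℝ) < γ+1)]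
  | succ n =>
    show cesConv (γ+1) g (n+1) - cesConv (γ+1) g n = cesConv γ g (n+1)
    rw [sub_eq_iff_eq_add]
    unfold cesConv
    rw [Finset.sum_range_succ, Finset.sum_range_succ
      (f := fun j => (cesK γ (n+1-j) : ℂ) * g j)]
    have e0 : n+1-(n+1) = 0 := by omega
    rw [e0, cesK_zero_s6 hγ, cesK_zero_s6 (by positivity : (0:ℝ) < γ+1)]
    have step : ∑ j ∈ Finset.range (n+1), (cesK (γ+1) (n+1-j) : ℂ) * g j
        = ∑ j ∈ Finset.range (n+1), ((cesK γ (n+1-j) : ℂ) * g j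
            + (cesK (γ+1) (n-j) : ℂ) * g j) := by
      refine Finset.sum_congr rfl fun j hj => ?_
      have hj' : j ≤ n := Nat.lt_succ_iff.mp (Finset.mem_range.mp hj)
      have e1 : n+1-j = (n-j)+1 := by omega
      rw [e1, cesK_pascal hγ (n-j), ← e1]
      push_cast
      ring
    rw [step, Finset.sum_add_distrib]
    ring

lemma nablaC_cesConv_one (g : ℕ → ℂ) : nablaC (cesConv 1 g) = g := by
  funext n
  cases n with
  | zero => simp [nablaC, cesConv, cesK_one]
  | succ n =>
    show cesConv 1 g (n+1) - cesConv 1 g n = g (n+1)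
    simp [cesConv, cesK_one, Finset.sum_range_succ]

lemma nablaC_cesConv_comm (γ : ℝ) (h : ℕ → ℂ) :
    nablaC (cesConv γ h) = cesConv γ (nablaC h) := by
  funext n
  cases n with
  | zero => simp [nablaC, cesConv]
  | succ n =>
    show cesConv γ h (n+1) - cesConv γ h n
        = ∑ j ∈ Finset.range (n+1+1), (cesK γ (n+1-j) : ℂ) * nablaC h j
    have expand : ∑ j ∈ Finset.range (n+1+1), (cesK γ (n+1-j) : ℂ) * nablaC h j
        = ∑ j ∈ Finset.range (n+1+1), ((cesK γ (n+1-j) : ℂ) * h j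
            - (cesK γ (n+1-j) : ℂ) * (if j = 0 then 0 else h (j-1))) := by
      refine Finset.sum_congr rfl fun j _ => ?_
      unfold nablaC; ring
    rw [expand, Finset.sum_sub_distrib]
    have second : ∑ j ∈ Finset.range (n+1+1),
        (cesK γ (n+1-j) : ℂ) * (if j = 0 then 0 else h (j-1))
        = cesConv γ h n := by
      rw [Finset.sum_range_succ']
      simp only [Nat.add_sub_cancel, Nat.succ_ne_zero, if_false, if_true,
        mul_zero, add_zero, reduceIte]
      refine Finset.sum_congr rfl fun j hj => ?_
      have e1 : n+1-(j+1) = n-j := by omega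
      rw [e1]
    rw [second]
    rfl

lemma cesConv_cesConv {γ δ : ℝ} (hγ : 0 < γ) (hδ : 0 < δ) (g : ℕ → ℂ) :
    cesConv γ (cesConv δ g) = cesConv (γ+δ) g := by
  funext n
  unfold cesConv
  have expand : ∑ j ∈ Finset.range (n+1), (cesK γ (n-j) : ℂ) * ∑ i ∈
      Finset.range (j+1), (cesK δ (j-i) : ℂ) * g i
      = ∑ j ∈ Finset.range (n+1), ∑ i ∈ Finset.range (j+1),
          (cesK γ (n-j) : ℂ) * ((cesK δ (j-i) : ℂ) * g i) := by
    refine Finset.sum_congr rfl fun j _ => ?_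
    rw [Finset.mul_sum]
  rw [expand, tri_swap]
  refine Finset.sum_congr rfl fun i hi => ?_
  have hi' : i ≤ n := Nat.lt_succ_iff.mp (Finset.mem_range.mp hi)
  rw [Finset.sum_Ico_eq_sum_range]
  have e1 : n+1-i = (n-i)+1 := by omega
  rw [e1]
  have term : ∀ t ∈ Finset.range ((n-i)+1),
      (cesK γ (n-(i+t)) : ℂ) * ((cesK δ (i+t-i) : ℂ) * g i)
      = ((cesK γ ((n-i)-t) * cesK δ t : ℝ) : ℂ) * g i := by
    intro t ht
    have e2 : n-(i+t) = (n-i)-t := by omega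
    have e3 : i+t-i = t := by omega
    rw [e2, e3]
    push_cast
    ring
  rw [Finset.sum_congr rfl term, ← Finset.sum_mul, ← Complex.ofReal_sum,
    cesK_vandermonde hγ hδ]




lemma iter_nablaC_cesConv (k : ℕ) (g : ℕ → ℂ) :
    nablaC^[k+1] (cesConv ((k:ℝ)+1) g) = g := by
  induction k with
  | zero =>
    simp only [Nat.cast_zero, zero_add, Function.iterate_one]
    exact nablaC_cesConv_one g
  | succ k ih =>
    have e : ((k+1:ℕ):ℝ)+1 = ((k:ℕ):ℝ)+1+1 := by push_cast; ring
    rw [e, Function.iterate_succ_apply,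
      nablaC_cesConv_succ (by positivity : (0:ℝ) < (k:ℝ)+1) g, ih]

lemma cesConv_nablaC_iter (γ : ℝ) (k : ℕ) (h : ℕ → ℂ) :
    cesConv γ (nablaC^[k] h) = nablaC^[k] (cesConv γ h) := by
  induction k with
  | zero => rfl
  | succ k ih =>
    rw [Function.iterate_succ_apply', Function.iterate_succ_apply',
      ← nablaC_cesConv_comm, ih]

lemma weylSum_vanish_s6 {N : ℕ} {f : ℕ → ℂ} (hf : ∀ n, N ≤ n → f n = 0) (γ : ℝ) :
    ∀ n, N ≤ n → weylSum γ f n = 0 := by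
  intro n hn
  unfold weylSum
  exact finsum_eq_zero_of_forall_eq_zero fun j => by
    rw [hf (j+n) (le_trans hn (Nat.le_add_left n j)), smul_zero]

lemma weylSum_eq {N : ℕ} {f : ℕ → ℂ} (hf : ∀ n, N ≤ n → f n = 0) (γ : ℝ) (n : ℕ) :
    weylSum γ f n = ∑ j ∈ Finset.range N, (cesK γ j : ℂ) * f (j + n) := by
  unfold weylSum
  have hsupp : (Function.support fun j : ℕ => cesK γ j • f (j + n))
      ⊆ ↑(Finset.range N) := by
    intro j hj
    simp only [Function.mem_support] at hj
    simp only [Finset.coe_range, Set.mem_Iio]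
    by_contra h
    push_neg at h
    rw [hf (j+n) (le_trans h (Nat.le_add_right j n)), smul_zero] at hj
    exact hj rfl
  rw [finsum_eq_finset_sum_of_support_subset _ hsupp]
  exact Finset.sum_congr rfl fun j _ => by rw [Complex.real_smul]

lemma fdiff_vanish {N : ℕ} {F : ℕ → ℂ} (hF : ∀ n, N ≤ n → F n = 0) :
    ∀ n, N ≤ n → fdiff F n = 0 := fun n hn => by
  unfold fdiff
  rw [hF n hn, hF (n+1) (le_trans hn (Nat.le_succ n)), sub_zero]

lemma fdiff_iter_vanish {N : ℕ} {F : ℕ → ℂ} (hF : ∀ n, N ≤ n → F n = 0) (k : ℕ) :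
    ∀ n, N ≤ n → fdiff^[k] F n = 0 := by
  induction k with
  | zero => exact hF
  | succ k ih =>
    intro n hn
    rw [Function.iterate_succ_apply']
    exact fdiff_vanish ih n hn

lemma weylDiff_vanish {N : ℕ} {f : ℕ → ℂ} (hf : ∀ n, N ≤ n → f n = 0) (α : ℝ) :
    ∀ n, N ≤ n → weylDiff α f n = 0 := by
  intro n hn
  unfold weylDiff
  by_cases h : α = 0
  · rw [if_pos h]; exact hf n hn
  · rw [if_neg h]
    have := fdiff_iter_vanish (weylSum_vanish_s6 hf ((⌊α⌋₊ : ℝ) + 1 - α)) (⌊α⌋₊ + 1) n hn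
    rw [Pi.smul_apply, this, smul_zero]

lemma abel_step {N : ℕ} {F : ℕ → ℂ} (hF : ∀ n, N ≤ n → F n = 0) (G : ℕ → ℂ) :
    ∑ n ∈ Finset.range N, fdiff F n * G n = -∑ n ∈ Finset.range N, F n * nablaC G n := by
  have expand : ∀ n ∈ Finset.range N, fdiff F n * G n
      = F (n+1) * G n - F n * G n := fun n _ => by unfold fdiff; ring
  have expand2 : ∀ n ∈ Finset.range N, F n * nablaC G n
      = F n * G n - F n * (if n = 0 then 0 else G (n-1)) := fun n _ => by unfold nablaC; ring
  rw [Finset.sum_congr rfl expand, Finset.sum_congr rfl expand2,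
    Finset.sum_sub_distrib, Finset.sum_sub_distrib]
  have key : ∑ n ∈ Finset.range N, F (n+1) * G n
      = ∑ n ∈ Finset.range N, F n * (if n = 0 then 0 else G (n-1)) := by
    have e1 : ∑ n ∈ Finset.range (N+1), F n * (if n = 0 then 0 else G (n-1))
        = ∑ n ∈ Finset.range N, F (n+1) * G n := by
      rw [Finset.sum_range_succ']
      simp
    have e2 : ∑ n ∈ Finset.range (N+1), F n * (if n = 0 then 0 else G (n-1))
        = ∑ n ∈ Finset.range N, F n * (if n = 0 then 0 else G (n-1)) := by
      rw [Finset.sum_range_succ, hF N le_rfl]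
      simp
    rw [← e1, e2]
  rw [key]
  ring

lemma abel_iter {N : ℕ} (k : ℕ) {F : ℕ → ℂ} (hF : ∀ n, N ≤ n → F n = 0) (G : ℕ → ℂ) :
    ∑ n ∈ Finset.range N, fdiff^[k] F n * G n
    = (-1)^k * ∑ n ∈ Finset.range N, F n * nablaC^[k] G n := by
  induction k generalizing F with
  | zero => simp
  | succ k ih =>
    have e1 : fdiff^[k+1] F = fdiff^[k] (fdiff F) := Function.iterate_succ_apply fdiff k F
    have e2 : nablaC^[k+1] G = nablaC (nablaC^[k] G) := Function.iterate_succ_apply' nablaC k G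
    rw [e1, ih (fdiff_vanish hF), abel_step hF (nablaC^[k] G), e2]
    ring

lemma core {N : ℕ} {f : ℕ → ℂ} (hf : ∀ n, N ≤ n → f n = 0) (γ : ℝ) (g : ℕ → ℂ) :
    ∑ n ∈ Finset.range N, weylSum γ f n * g n
    = ∑ n ∈ Finset.range N, f n * cesConv γ g n := by
  have lhs : ∑ n ∈ Finset.range N, weylSum γ f n * g n
      = ∑ n ∈ Finset.range N, ∑ j ∈ Finset.range N, (cesK γ j:ℂ) * f (j+n) * g n := by
    refine Finset.sum_congr rfl fun n _ => ?_
    rw [weylSum_eq hf, Finset.sum_mul]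
  have rhs : ∑ n ∈ Finset.range N, f n * cesConv γ g n
      = ∑ n ∈ Finset.range N, ∑ i ∈ Finset.range (n+1), (cesK γ (n-i):ℂ) * f n * g i := by
    refine Finset.sum_congr rfl fun n _ => ?_
    unfold cesConv
    rw [Finset.mul_sum]
    exact Finset.sum_congr rfl fun i _ => by ring
  rw [lhs, rhs, tri_swap]
  refine Finset.sum_congr rfl fun i hi => ?_
  have hi' : i < N := Finset.mem_range.mp hi
  rw [Finset.sum_Ico_eq_sum_range]
  have inner : ∑ t ∈ Finset.range (N-i), (cesK γ (i+t-i):ℂ) * f (i+t) * g i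
      = ∑ t ∈ Finset.range (N-i), (cesK γ t:ℂ) * f (t+i) * g i := by
    refine Finset.sum_congr rfl fun t _ => ?_
    have e1 : i+t-i = t := by omega
    have e2 : i+t = t+i := by omega
    rw [e1, e2]
  have ext : ∑ t ∈ Finset.range (N-i), (cesK γ t:ℂ) * f (t+i) * g i
      = ∑ j ∈ Finset.range N, (cesK γ j:ℂ) * f (j+i) * g i :=
    Finset.sum_subset (Finset.range_subset_range.mpr (by omega : N-i ≤ N))
      (fun j _ hj2 => by
        have hNj : N ≤ j + i := by
          simp only [Finset.mem_range, not_lt] at hj2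
          omega
        rw [hf (j+i) hNj, mul_zero, zero_mul])
  rw [inner, ext]

lemma master {N : ℕ} {f g : ℕ → ℂ} (hf : ∀ n, N ≤ n → f n = 0)
    (hg : ∀ n, N ≤ n → g n = 0) {α : ℝ} (hα : 0 < α) :
    ∑ n ∈ Finset.range N, weylDiff α f n * cesConv α g n
    = ∑ n ∈ Finset.range N, f n * g n := by
  set m := ⌊α⌋₊ + 1 with hm
  set β := ((⌊α⌋₊ : ℝ) + 1 - α) with hβdef
  have hβ : 0 < β := by
    have h1 := Nat.lt_floor_add_one α
    rw [hβdef]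
    linarith
  have hwd : weylDiff α f = ((-1:ℝ)^m) • fdiff^[m] (weylSum β f) := by
    unfold weylDiff
    rw [if_neg hα.ne']
  have hF : ∀ n, N ≤ n → weylSum β f n = 0 := weylSum_vanish_s6 hf β
  have step1 : ∑ n ∈ Finset.range N, weylDiff α f n * cesConv α g n
      = ((-1:ℂ)^m) * ∑ n ∈ Finset.range N,
          fdiff^[m] (weylSum β f) n * cesConv α g n := by
    rw [hwd, Finset.mul_sum]
    refine Finset.sum_congr rfl fun n _ => ?_
    rw [Pi.smul_apply, Complex.real_smul]
    push_cast
    ring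
  have neg1 : ∀ S : ℂ, ((-1:ℂ)^m) * (((-1:ℂ)^m) * S) = S := fun S => by
    rw [← mul_assoc, ← mul_pow]
    norm_num
  have final : cesConv β (nablaC^[m] (cesConv α g)) = g := by
    rw [cesConv_nablaC_iter, cesConv_cesConv hβ hα]
    have e : β + α = ((⌊α⌋₊:ℕ):ℝ) + 1 := by rw [hβdef]; push_cast; ring
    rw [e, hm]
    exact iter_nablaC_cesConv ⌊α⌋₊ g
  rw [step1, abel_iter m hF _, neg1, core hf β, final]

theorem stmt6 (f g : ℕ → ℂ) (hf : (Function.support f).Finite)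
    (hg : (Function.support g).Finite) (α : ℝ) (hα : 0 < α) :
    (∑ᶠ n : ℕ, weylSum α f n * g n) = (∑ᶠ n : ℕ, f n * cesConv α g n) ∧
    (∑ᶠ n : ℕ, f n * g n) = (∑ᶠ n : ℕ, weylDiff α f n * cesConv α g n) ∧
    (∑ᶠ n : ℕ, f n * g n) = (∑ᶠ n : ℕ, cesConv α f n * weylDiff α g n) := by
  classical
  set s : Finset ℕ := hf.toFinset ∪ hg.toFinset with hs
  set N : ℕ := s.sup id + 1 with hN
  have hfN : ∀ n, N ≤ n → f n = 0 := by
    intro n hn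
    by_contra h
    have hmem : n ∈ s := Finset.mem_union.mpr (Or.inl (hf.mem_toFinset.mpr h))
    have := Finset.le_sup (f := id) hmem
    simp only [id] at this
    omega
  have hgN : ∀ n, N ≤ n → g n = 0 := by
    intro n hn
    by_contra h
    have hmem : n ∈ s := Finset.mem_union.mpr (Or.inr (hg.mem_toFinset.mpr h))
    have := Finset.le_sup (f := id) hmem
    simp only [id] at this
    omega
  have sub_of_right : ∀ (u v : ℕ → ℂ), (∀ n, N ≤ n → v n = 0) →
      Function.support (fun n => u n * v n) ⊆ ↑(Finset.range N) := by
    intro u v hv n hn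
    simp only [Function.mem_support] at hn
    simp only [Finset.coe_range, Set.mem_Iio]
    by_contra h
    push_neg at h
    exact hn (by rw [hv n h, mul_zero])
  have sub_of_left : ∀ (u v : ℕ → ℂ), (∀ n, N ≤ n → u n = 0) →
      Function.support (fun n => u n * v n) ⊆ ↑(Finset.range N) := by
    intro u v hu n hn
    simp only [Function.mem_support] at hn
    simp only [Finset.coe_range, Set.mem_Iio]
    by_contra h
    push_neg at h
    exact hn (by rw [hu n h, zero_mul])
  refine ⟨?_, ?_, ?_⟩
  · rw [finsum_eq_finset_sum_of_support_subset _ (sub_of_right _ _ hgN),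
      finsum_eq_finset_sum_of_support_subset _ (sub_of_left _ _ hfN)]
    exact core hfN α g
  · rw [finsum_eq_finset_sum_of_support_subset _ (sub_of_left _ _ hfN),
      finsum_eq_finset_sum_of_support_subset _
        (sub_of_left _ _ (weylDiff_vanish hfN α))]
    exact (master hfN hgN hα).symm
  · rw [finsum_eq_finset_sum_of_support_subset _ (sub_of_left _ _ hfN),
      finsum_eq_finset_sum_of_support_subset _
        (sub_of_right _ _ (weylDiff_vanish hgN α))]
    have : ∑ n ∈ Finset.range N, cesConv α f n * weylDiff α g n
        = ∑ n ∈ Finset.range N, weylDiff α g n * cesConv α f n :=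
      Finset.sum_congr rfl fun n _ => mul_comm _ _
    rw [this, master hgN hfN hα]
    exact Finset.sum_congr rfl fun n _ => mul_comm _ _
end

section
/- Let α > 0 and let φ : ℕ₀ → (0,∞) belong to the class ω_{α,loc} with constant c_φ. Then k^α(n) ≤ c_φ·φ(n) for all n ≥ 1, and c_φ·φ(n) ≤ (c_φ·φ(1))^n for all n ≥ 1; in particular φ grows at most exponentially. -/
/-- `φ` belongs to the class `ω_{α,loc}` with constant `c`:
`(∑_{n=0}^{j} + ∑_{n=p+1}^{j+p}) k^α(n)·φ(j+p-n) ≤ c·φ(j)·φ(p)` for all `1 ≤ j ≤ p`. -/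
def omegaLoc (α : ℝ) (φ : ℕ → ℝ) (c : ℝ) : Prop :=
  ∀ j p : ℕ, 1 ≤ j → j ≤ p →
    ((∑ n ∈ Finset.range (j + 1), cesK α n * φ (j + p - n)) +
        ∑ n ∈ Finset.Icc (p + 1) (j + p), cesK α n * φ (j + p - n)) ≤ c * (φ j * φ p)

theorem stmt9 (α : ℝ) (hα : 0 < α) (φ : ℕ → ℝ) (hφ : ∀ n, 0 < φ n) (c : ℝ) (hc : 0 < c)
    (h : omegaLoc α φ c) :
    (∀ n : ℕ, 1 ≤ n → cesK α n ≤ c * φ n) ∧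
      ∀ n : ℕ, 1 ≤ n → c * φ n ≤ (c * φ 1) ^ n := by
  have hK : ∀ n : ℕ, 0 < cesK α n := by
    intro n
    have h1 : 0 < Real.Gamma ((n : ℝ) + α) :=
      Real.Gamma_pos_of_pos (by positivity)
    have h2 : 0 < Real.Gamma α := Real.Gamma_pos_of_pos hα
    have h3 : 0 < Real.Gamma ((n : ℝ) + 1) :=
      Real.Gamma_pos_of_pos (by positivity)
    exact div_pos h1 (mul_pos h2 h3)
  have hK0 : cesK α 0 = 1 := by
    simp [cesK, Real.Gamma_one, div_self (Real.Gamma_pos_of_pos hα).ne']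
  -- Part 1
  have part1 : ∀ n : ℕ, 1 ≤ n → cesK α n ≤ c * φ n := by
    intro n hn
    have hineq := h n n hn le_rfl
    have hterm : cesK α n * φ n ≤
        ∑ m ∈ Finset.range (n + 1), cesK α m * φ (n + n - m) := by
      have := Finset.single_le_sum (f := fun m => cesK α m * φ (n + n - m))
        (fun i _ => le_of_lt (mul_pos (hK i) (hφ _)))
        (Finset.self_mem_range_succ n)
      simpa using this
    have hsum2 : 0 ≤ ∑ m ∈ Finset.Icc (n + 1) (n + n), cesK α m * φ (n + n - m) :=
      Finset.sum_nonneg fun i _ => le_of_lt (mul_pos (hK i) (hφ _))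
    have : cesK α n * φ n ≤ c * (φ n * φ n) := by linarith
    have hφn := hφ n
    have h' : cesK α n * φ n ≤ (c * φ n) * φ n := by linarith
    exact le_of_mul_le_mul_right h' hφn
  -- key step: φ (n+1) ≤ c * φ 1 * φ n for n ≥ 1
  have step : ∀ n : ℕ, 1 ≤ n → φ (n + 1) ≤ c * (φ 1 * φ n) := by
    intro n hn
    have hineq := h 1 n le_rfl hn
    have hterm : cesK α 0 * φ (1 + n) ≤
        ∑ m ∈ Finset.range 2, cesK α m * φ (1 + n - m) := by
      have := Finset.single_le_sum (f := fun m => cesK α m * φ (1 + n - m))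
        (fun i _ => le_of_lt (mul_pos (hK i) (hφ _)))
        (show 0 ∈ Finset.range 2 by decide)
      simpa using this
    have hsum2 : 0 ≤ ∑ m ∈ Finset.Icc (n + 1) (1 + n), cesK α m * φ (1 + n - m) :=
      Finset.sum_nonneg fun i _ => le_of_lt (mul_pos (hK i) (hφ _))
    have h1n : (1 : ℕ) + n = n + 1 := by omega
    rw [hK0, one_mul, h1n] at hterm
    rw [h1n] at hineq hsum2
    linarith
  refine ⟨part1, ?_⟩
  intro n hn
  induction n with
  | zero => omega
  | succ m ih =>
    rcases Nat.eq_or_lt_of_le hn with h1 | h1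
    · simp [← h1]
    · have hm : 1 ≤ m := by omega
      have ihm := ih hm
      have hs := step m hm
      have hcφ1 : 0 < c * φ 1 := mul_pos hc (hφ 1)
      calc c * φ (m + 1) ≤ c * (c * (φ 1 * φ m)) := by
            exact mul_le_mul_of_nonneg_left hs hc.le
        _ = (c * φ 1) * (c * φ m) := by ring
        _ ≤ (c * φ 1) * (c * φ 1) ^ m := mul_le_mul_of_nonneg_left ihm hcφ1.le
        _ = (c * φ 1) ^ (m + 1) := by ring
end

section
/- Let α > 0 and β > 0. Then the sequence k^β belongs to the class ω_{α,loc} if and only if β ≥ α + 1. -/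
/-- `φ` belongs to the class `ω_{α,loc}` with constant `c`. -/
def omegaLocC (α : ℝ) (φ : ℕ → ℝ) (c : ℝ) : Prop :=
  ∀ j p : ℕ, 1 ≤ j → j ≤ p →
    ((∑ n ∈ Finset.range (j + 1), cesK α n * φ (j + p - n)) +
        ∑ n ∈ Finset.Icc (p + 1) (j + p), cesK α n * φ (j + p - n)) ≤ c * (φ j * φ p)

noncomputable def myP (γ : ℝ) (n : ℕ) : ℝ := ∏ i ∈ Finset.range n, (γ + i) / (i + 1)

lemma myP_pos {γ : ℝ} (hγ : 0 < γ) (n : ℕ) : 0 < myP γ n := by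
  apply Finset.prod_pos
  intro i _
  positivity

lemma myP_succ (γ : ℝ) (n : ℕ) : myP γ (n + 1) = myP γ n * ((γ + n) / (n + 1)) :=
  Finset.prod_range_succ _ n

lemma cesK_eq_s10 {γ : ℝ} (hγ : 0 < γ) (n : ℕ) : cesK γ n = myP γ n := by
  induction n with
  | zero =>
    simp [cesK, myP, Real.Gamma_one, (Real.Gamma_pos_of_pos hγ).ne']
  | succ n ih =>
    have h1 : ((n : ℝ) + 1) + γ = ((n : ℝ) + γ) + 1 := by ring
    have h2 : ((n : ℝ) + 1) + 1 = ((n : ℝ) + 1) + 1 := rfl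
    have hg1 : Real.Gamma (((n : ℝ) + 1) + γ) = ((n : ℝ) + γ) * Real.Gamma ((n : ℝ) + γ) := by
      rw [h1, Real.Gamma_add_one (by positivity)]
    have hg2 : Real.Gamma (((n : ℝ) + 1) + 1) = ((n : ℝ) + 1) * Real.Gamma ((n : ℝ) + 1) := by
      rw [Real.Gamma_add_one (by positivity)]
    rw [myP_succ, ← ih]
    have hΓα := (Real.Gamma_pos_of_pos hγ).ne'
    have hΓn : Real.Gamma ((n : ℝ) + 1) ≠ 0 := (Real.Gamma_pos_of_pos (by positivity)).ne'
    simp only [cesK, Nat.cast_succ, hg1, hg2]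
    field_simp
    ring

lemma myP_mono_param {γ δ : ℝ} (hγ : 0 < γ) (h : γ ≤ δ) (n : ℕ) : myP γ n ≤ myP δ n := by
  apply Finset.prod_le_prod
  · intro i _; positivity
  · intro i _
    apply div_le_div_of_nonneg_right (by linarith) (by positivity)

lemma myP_mono_n {γ : ℝ} (hγ : 1 ≤ γ) {n m : ℕ} (h : n ≤ m) : myP γ n ≤ myP γ m := by
  unfold myP
  rw [← Finset.prod_range_mul_prod_Ico (fun i : ℕ => (γ + i) / (i + 1)) h]
  have h1 : (1:ℝ) ≤ ∏ i ∈ Finset.Ico n m, (γ + i) / (i + 1) := by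
    calc (1:ℝ) = ∏ _i ∈ Finset.Ico n m, (1:ℝ) := by simp
    _ ≤ _ := by
        apply Finset.prod_le_prod (by intros; norm_num)
        intro i _
        rw [le_div_iff₀ (by positivity)]
        linarith
  have h2 : (0:ℝ) < ∏ i ∈ Finset.range n, (γ + i) / (i + 1) := myP_pos (by linarith) n
  nlinarith [h2]

lemma myP_ratio {γ : ℝ} (hγ : γ ≠ 0) (p : ℕ) : myP (γ + 1) p = myP γ p * ((γ + p) / γ) := by
  induction p with
  | zero => simp [myP, div_self hγ]
  | succ p ih =>
    rw [myP_succ, myP_succ, ih]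
    have hp : (0:ℝ) < (p:ℝ) + 1 := by positivity
    push_cast
    field_simp
    ring

lemma myP_sum {γ : ℝ} (hγ : 0 < γ) (j : ℕ) :
    ∑ n ∈ Finset.range (j + 1), myP γ n = myP (γ + 1) j := by
  induction j with
  | zero => simp [myP]
  | succ j ih =>
    rw [Finset.sum_range_succ, ih, myP_ratio hγ.ne', myP_ratio hγ.ne', myP_succ]
    have hp : (0:ℝ) < (j:ℝ) + 1 := by positivity
    push_cast
    field_simp
    ring

lemma myP_upper {γ : ℝ} (hγ : 0 < γ) {p m : ℕ} (h1 : p ≤ m) (h2 : m ≤ 2 * p) :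
    myP γ m ≤ Real.exp γ * myP γ p := by
  unfold myP
  rw [← Finset.prod_range_mul_prod_Ico (fun i : ℕ => (γ + i) / (i + 1)) h1]
  have hPp : (0:ℝ) < ∏ i ∈ Finset.range p, (γ + i) / (i + 1) := myP_pos hγ p
  have h0' : (0:ℝ) < (p:ℝ) + 1 := by positivity
  have key : ∏ i ∈ Finset.Ico p m, (γ + (i:ℝ)) / (i + 1) ≤ Real.exp γ := by
    calc ∏ i ∈ Finset.Ico p m, (γ + (i:ℝ)) / (i + 1)
        ≤ ∏ _i ∈ Finset.Ico p m, Real.exp (γ / (p + 1)) := by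
          apply Finset.prod_le_prod (by intro i _; positivity)
          intro i hi
          have hip : p ≤ i := (Finset.mem_Ico.mp hi).1
          have hip' : (p:ℝ) ≤ i := by exact_mod_cast hip
          have h0 : (0:ℝ) < (i:ℝ) + 1 := by positivity
          have hq : γ ≤ γ / (p + 1) * ((i:ℝ) + 1) := by
            rw [div_mul_eq_mul_div, le_div_iff₀ h0']
            nlinarith
          have e1 : 1 + γ / (p + 1) ≤ Real.exp (γ / (p + 1)) := by
            have := Real.add_one_le_exp (γ / ((p:ℝ) + 1)); linarith
          have e0 : (γ + (i:ℝ)) / (i + 1) ≤ 1 + γ / (p + 1) := by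
            rw [div_le_iff₀ h0]
            nlinarith
          linarith
    _ = Real.exp (γ / (p + 1)) ^ (m - p) := by rw [Finset.prod_const, Nat.card_Ico]
    _ = Real.exp (((m - p : ℕ) : ℝ) * (γ / (p + 1))) := (Real.exp_nat_mul _ _).symm
    _ ≤ Real.exp γ := by
          apply Real.exp_le_exp.mpr
          have hmp : ((m - p : ℕ) : ℝ) ≤ (p:ℝ) + 1 := by
            have h3 : m - p ≤ p := by omega
            have h4 : ((m - p : ℕ) : ℝ) ≤ (p:ℝ) := by exact_mod_cast h3
            linarith
          have hd : (0:ℝ) ≤ γ / (p + 1) := by positivity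
          have : ((m - p : ℕ) : ℝ) * (γ / (p + 1)) ≤ ((p:ℝ) + 1) * (γ / (p + 1)) :=
            mul_le_mul_of_nonneg_right hmp hd
          have heq : ((p:ℝ) + 1) * (γ / (p + 1)) = γ := by field_simp
          linarith
  calc (∏ i ∈ Finset.range p, (γ + (i:ℝ)) / (i + 1)) * ∏ i ∈ Finset.Ico p m, (γ + (i:ℝ)) / (i + 1)
      ≤ (∏ i ∈ Finset.range p, (γ + (i:ℝ)) / (i + 1)) * Real.exp γ :=
        mul_le_mul_of_nonneg_left key hPp.le
  _ = _ := by ring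

lemma myP_lower {γ : ℝ} (hγ : 0 < γ) {p m : ℕ} (h1 : p ≤ m) (h2 : m ≤ 2 * p) :
    min 1 γ * myP γ p ≤ myP γ m := by
  rcases le_or_gt 1 γ with hg1 | hg1
  · rw [min_eq_left hg1, one_mul]
    exact myP_mono_n hg1 h1
  · rw [min_eq_right hg1.le]
    unfold myP
    rw [← Finset.prod_range_mul_prod_Ico (fun i : ℕ => (γ + i) / (i + 1)) h1]
    have hPp : (0:ℝ) < ∏ i ∈ Finset.range p, (γ + i) / (i + 1) := myP_pos hγ p
    have h0' : (0:ℝ) < (p:ℝ) + 1 := by positivity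
    have hp0 : (0:ℝ) ≤ (p:ℝ) := Nat.cast_nonneg p
    have key : γ ≤ ∏ i ∈ Finset.Ico p m, (γ + (i:ℝ)) / (i + 1) := by
      set t : ℝ := (γ - 1) / (p + 1) with ht
      have htneg : t ≤ 0 :=
        div_nonpos_of_nonpos_of_nonneg (by linarith) (by positivity)
      have ht1 : -1 < t := by
        rw [ht, lt_div_iff₀ h0']
        nlinarith
      calc γ ≤ 1 + (p:ℝ) * t := by
              have h5 : γ - 1 ≤ (p:ℝ) * t := by
                rw [ht, mul_div_assoc', le_div_iff₀ h0']
                nlinarith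
              linarith
      _ ≤ (1 + t) ^ p := one_add_mul_le_pow (by linarith) p
      _ ≤ (1 + t) ^ (m - p) := by
            apply pow_le_pow_of_le_one (by linarith) (by linarith) (by omega)
      _ ≤ ∏ i ∈ Finset.Ico p m, (γ + (i:ℝ)) / (i + 1) := by
            rw [← Nat.card_Ico p m, ← Finset.prod_const]
            apply Finset.prod_le_prod (fun i _ => by linarith)
            intro i hi
            have hip : p ≤ i := (Finset.mem_Ico.mp hi).1
            have hip' : (p:ℝ) ≤ i := by exact_mod_cast hip
            have h0 : (0:ℝ) < (i:ℝ) + 1 := by positivity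
            have h6 : t * ((i:ℝ) + 1) ≤ γ - 1 := by
              rw [ht, div_mul_eq_mul_div, div_le_iff₀ h0']
              nlinarith
            rw [le_div_iff₀ h0]
            nlinarith
    calc γ * ∏ i ∈ Finset.range p, (γ + (i:ℝ)) / (i + 1)
        = (∏ i ∈ Finset.range p, (γ + (i:ℝ)) / (i + 1)) * γ := by ring
    _ ≤ _ := mul_le_mul_of_nonneg_left key hPp.le

lemma weier (f : ℕ → ℝ) (hf : ∀ i, 0 ≤ f i) (p : ℕ) :
    1 + ∑ i ∈ Finset.range p, f i ≤ ∏ i ∈ Finset.range p, (1 + f i) := by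
  induction p with
  | zero => simp
  | succ p ih =>
    rw [Finset.sum_range_succ, Finset.prod_range_succ]
    have hs : 0 ≤ ∑ i ∈ Finset.range p, f i := Finset.sum_nonneg fun i _ => hf i
    nlinarith [hf p, ih]

lemma myP_gap {α β : ℝ} (hα : 0 < α) (hβ : 0 < β) (hlt : β < α + 1) (p : ℕ) :
    myP β p * (1 + (α + 1 - β) / (1 + β) * ∑ i ∈ Finset.range p, (1 / ((i:ℝ) + 1))) ≤
      myP (α + 1) p := by
  have hsplit : myP (α + 1) p = myP β p * ∏ i ∈ Finset.range p, (1 + (α + 1 - β) / (β + i)) := by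
    unfold myP
    rw [← Finset.prod_mul_distrib]
    apply Finset.prod_congr rfl
    intro i _
    have h1 : (0:ℝ) < β + i := by positivity
    have h2 : (0:ℝ) < (i:ℝ) + 1 := by positivity
    field_simp
    ring
  rw [hsplit]
  apply mul_le_mul_of_nonneg_left _ (myP_pos hβ p).le
  calc 1 + (α + 1 - β) / (1 + β) * ∑ i ∈ Finset.range p, (1 / ((i:ℝ) + 1))
      = 1 + ∑ i ∈ Finset.range p, (α + 1 - β) / (1 + β) * (1 / ((i:ℝ) + 1)) := by
        rw [Finset.mul_sum]
  _ ≤ 1 + ∑ i ∈ Finset.range p, (α + 1 - β) / (β + i) := by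
        apply add_le_add_right
        apply Finset.sum_le_sum
        intro i _
        have h1 : (0:ℝ) < β + i := by positivity
        have h2 : (0:ℝ) < (1 + β) * ((i:ℝ) + 1) := by positivity
        rw [div_mul_div_comm, mul_one, div_le_div_iff₀ h2 h1]
        have h3 : (0:ℝ) ≤ (i:ℝ) := Nat.cast_nonneg i
        have h4 : β + (i:ℝ) ≤ (1 + β) * ((i:ℝ) + 1) := by nlinarith
        have h5 : (0:ℝ) ≤ α + 1 - β := by linarith
        nlinarith [mul_le_mul_of_nonneg_left h4 h5]
  _ ≤ _ := weier _ (fun i => div_nonneg (by linarith) (by positivity)) p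

theorem stmt10 (α β : ℝ) (hα : 0 < α) (hβ : 0 < β) :
    (∃ c : ℝ, 0 < c ∧ omegaLocC α (cesK β) c) ↔ α + 1 ≤ β := by
  constructor
  · rintro ⟨c, hc, hω⟩
    by_contra hlt
    push_neg at hlt
    set δ' : ℝ := (α + 1 - β) / (1 + β) with hδ'def
    have hδ' : 0 < δ' := div_pos (by linarith) (by linarith)
    have hmin : 0 < min 1 β := lt_min one_pos hβ
    have key : ∀ p : ℕ, 1 ≤ p →
        min 1 β * (1 + δ' * ∑ i ∈ Finset.range p, (1 / ((i:ℝ) + 1))) ≤ c := by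
      intro p hp
      have h := hω p p hp le_rfl
      simp only [cesK_eq_s10 hα, cesK_eq_s10 hβ] at h
      have hPβ := myP_pos hβ p
      have hB : 0 ≤ ∑ n ∈ Finset.Icc (p+1) (p+p), myP α n * myP β (p + p - n) :=
        Finset.sum_nonneg fun n _ => mul_nonneg (myP_pos hα n).le (myP_pos hβ _).le
      have hA : (min 1 β * myP β p) * myP (α+1) p ≤
          ∑ n ∈ Finset.range (p+1), myP α n * myP β (p + p - n) := by
        rw [← myP_sum hα p, Finset.mul_sum]
        apply Finset.sum_le_sum
        intro n hn
        have hn' : n ≤ p := Nat.lt_succ_iff.mp (Finset.mem_range.mp hn)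
        have hm1 : p ≤ p + p - n := by omega
        have hm2 : p + p - n ≤ 2 * p := by omega
        have hlow := myP_lower hβ hm1 hm2
        calc min 1 β * myP β p * myP α n = myP α n * (min 1 β * myP β p) := by ring
        _ ≤ myP α n * myP β (p + p - n) :=
            mul_le_mul_of_nonneg_left hlow (myP_pos hα n).le
      have hgap := myP_gap hα hβ hlt p
      have hK : (0:ℝ) < myP β p * myP β p := mul_pos hPβ hPβ
      have h2 : min 1 β * (1 + δ' * ∑ i ∈ Finset.range p, (1 / ((i:ℝ) + 1)))
          * (myP β p * myP β p) ≤ c * (myP β p * myP β p) := by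
        calc min 1 β * (1 + δ' * ∑ i ∈ Finset.range p, (1 / ((i:ℝ) + 1)))
              * (myP β p * myP β p)
            = (min 1 β * myP β p) *
              (myP β p * (1 + δ' * ∑ i ∈ Finset.range p, (1 / ((i:ℝ) + 1)))) := by ring
        _ ≤ (min 1 β * myP β p) * myP (α+1) p :=
            mul_le_mul_of_nonneg_left hgap (mul_nonneg hmin.le hPβ.le)
        _ ≤ ∑ n ∈ Finset.range (p+1), myP α n * myP β (p + p - n) := hA
        _ ≤ (∑ n ∈ Finset.range (p+1), myP α n * myP β (p + p - n)) +
            ∑ n ∈ Finset.Icc (p+1) (p+p), myP α n * myP β (p + p - n) :=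
            le_add_of_nonneg_right hB
        _ ≤ c * (myP β p * myP β p) := h
      exact le_of_mul_le_mul_right h2 hK
    have htend := Real.tendsto_sum_range_one_div_nat_succ_atTop
    obtain ⟨N, hN⟩ := Filter.eventually_atTop.mp
      (htend.eventually_ge_atTop ((c / min 1 β) / δ'))
    set p := max N 1 with hpdef
    have hp1 : 1 ≤ p := le_max_right N 1
    have hH : (c / min 1 β) / δ' ≤ ∑ i ∈ Finset.range p, (1 / ((i:ℝ) + 1)) :=
      hN p (le_max_left N 1)
    have hk := key p hp1
    have h1 : δ' * ((c / min 1 β) / δ') ≤ δ' * ∑ i ∈ Finset.range p, (1 / ((i:ℝ) + 1)) :=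
      mul_le_mul_of_nonneg_left hH hδ'.le
    have h2 : δ' * ((c / min 1 β) / δ') = c / min 1 β := by
      field_simp
    have h3 : min 1 β * (1 + c / min 1 β) = min 1 β + c := by
      field_simp
    have h4 : min 1 β * (1 + c / min 1 β) ≤
        min 1 β * (1 + δ' * ∑ i ∈ Finset.range p, (1 / ((i:ℝ) + 1))) := by
      apply mul_le_mul_of_nonneg_left _ hmin.le
      linarith
    linarith
  · intro hba
    have hβ1 : (1:ℝ) ≤ β := by linarith
    refine ⟨Real.exp β + α * Real.exp α, by positivity, ?_⟩
    intro j p hj hjp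
    simp only [cesK_eq_s10 hα, cesK_eq_s10 hβ]
    have hPβj := myP_pos hβ j
    have hPβp := myP_pos hβ p
    have hjp' : (j:ℝ) ≤ (p:ℝ) := Nat.cast_le.mpr hjp
    have hA : ∑ n ∈ Finset.range (j+1), myP α n * myP β (j + p - n) ≤
        Real.exp β * (myP β j * myP β p) := by
      calc ∑ n ∈ Finset.range (j+1), myP α n * myP β (j + p - n)
          ≤ ∑ n ∈ Finset.range (j+1), myP α n * (Real.exp β * myP β p) := by
            apply Finset.sum_le_sum
            intro n hn
            have hn' : n ≤ j := Nat.lt_succ_iff.mp (Finset.mem_range.mp hn)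
            have hm1 : p ≤ j + p - n := by omega
            have hm2 : j + p - n ≤ 2 * p := by omega
            exact mul_le_mul_of_nonneg_left (myP_upper hβ hm1 hm2) (myP_pos hα n).le
      _ = (∑ n ∈ Finset.range (j+1), myP α n) * (Real.exp β * myP β p) := by
            rw [Finset.sum_mul]
      _ = myP (α+1) j * (Real.exp β * myP β p) := by rw [myP_sum hα]
      _ ≤ myP β j * (Real.exp β * myP β p) := by
            apply mul_le_mul_of_nonneg_right (myP_mono_param (by linarith) hba j)
            positivity
      _ = Real.exp β * (myP β j * myP β p) := by ring
    have hre : ∑ n ∈ Finset.Icc (p+1) (j+p), myP α n * myP β (j + p - n)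
        = ∑ m ∈ Finset.range j, myP α (j + p - m) * myP β m := by
      apply Finset.sum_nbij' (fun n => j + p - n) (fun m => j + p - m)
      · intro a ha
        simp only [Finset.mem_Icc] at ha
        simp only [Finset.mem_range]
        omega
      · intro a ha
        simp only [Finset.mem_range] at ha
        simp only [Finset.mem_Icc]
        omega
      · intro a ha; simp only [Finset.mem_Icc] at ha; omega
      · intro a ha; simp only [Finset.mem_range] at ha; omega
      · intro a ha
        simp only [Finset.mem_Icc] at ha
        have hxx : j + p - (j + p - a) = a := by omega
        rw [hxx]
    have hjα : (j:ℝ) * myP α p ≤ α * myP β p := by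
      have hr : myP (α+1) p = myP α p * ((α + p) / α) := myP_ratio hα.ne' p
      have hr2 : α * myP (α+1) p = myP α p * (α + (p:ℝ)) := by
        rw [hr]; field_simp
      have h5 : (j:ℝ) * myP α p ≤ (α + (p:ℝ)) * myP α p :=
        mul_le_mul_of_nonneg_right (by linarith) (myP_pos hα p).le
      have h6 : α * myP (α+1) p ≤ α * myP β p :=
        mul_le_mul_of_nonneg_left (myP_mono_param (by linarith) hba p) hα.le
      nlinarith [h5, h6, hr2]
    have hB : ∑ m ∈ Finset.range j, myP α (j + p - m) * myP β m ≤
        α * Real.exp α * (myP β j * myP β p) := by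
      calc ∑ m ∈ Finset.range j, myP α (j + p - m) * myP β m
          ≤ ∑ _m ∈ Finset.range j, (Real.exp α * myP α p) * myP β j := by
            apply Finset.sum_le_sum
            intro m hm
            have hm' : m < j := Finset.mem_range.mp hm
            have hm1 : p ≤ j + p - m := by omega
            have hm2 : j + p - m ≤ 2 * p := by omega
            exact mul_le_mul (myP_upper hα hm1 hm2) (myP_mono_n hβ1 hm'.le)
              (myP_pos hβ m).le (mul_nonneg (Real.exp_pos α).le (myP_pos hα p).le)
      _ = (j:ℝ) * ((Real.exp α * myP α p) * myP β j) := by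
            rw [Finset.sum_const, Finset.card_range, nsmul_eq_mul]
      _ = (Real.exp α * myP β j) * ((j:ℝ) * myP α p) := by ring
      _ ≤ (Real.exp α * myP β j) * (α * myP β p) :=
            mul_le_mul_of_nonneg_left hjα (mul_nonneg (Real.exp_pos α).le hPβj.le)
      _ = α * Real.exp α * (myP β j * myP β p) := by ring
    rw [hre]
    have : (Real.exp β + α * Real.exp α) * (myP β j * myP β p)
        = Real.exp β * (myP β j * myP β p) + α * Real.exp α * (myP β j * myP β p) := by ring
    rw [this]
    exact add_le_add hA hB
end
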